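/- arXiv:math/0608545 — 4 statements merged into one kernel-verified Lean document; each statement's English description precedes it below -/
import Mathlib

section
/- Let 0 < δ and C ∈ ℝ. Let F be holomorphic on the half-plane H = {z ∈ ℂ : Re z < ln δ} with F(z + 2πi) = F(z) + C for all z ∈ H, and suppose |Im F| is bounded on H. Then C = 0 and there exists a holomorphic function g on the disc B(0,δ) ⊆ ℂ such that F(z) = g(e^z) for all z ∈ H. (Equivalently: a multivalued holomorphic function f on a punctured disc B(0,δ)\{0} whose monodromy f(e^{2πi}x) − f(x) is a real constant and whose imaginary part is bounded is in fact single-valued and extends holomorphically across 0.) -/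
open Metric Set Filter Topology

lemma aux_punctured_preconnected {r : ℝ} (hr : 0 < r) :
    IsPreconnected (ball (0:ℂ) r \ {0}) := by
  have h1 : 1 < Module.rank ℝ ℂ := by rw [Complex.rank_real_complex]; norm_num
  have hs : IsPreconnected ((Ioo (0:ℝ) r) ×ˢ (sphere (0:ℂ) 1)) :=
    isPreconnected_Ioo.prod (isPathConnected_sphere h1 0 zero_le_one).isConnected.isPreconnected
  have himg := hs.image (fun p : ℝ × ℂ => p.1 • p.2)
    ((continuous_fst.smul continuous_snd).continuousOn)
  have heq : (fun p : ℝ × ℂ => p.1 • p.2) '' ((Ioo (0:ℝ) r) ×ˢ (sphere (0:ℂ) 1))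
      = ball (0:ℂ) r \ {0} := by
    ext x
    constructor
    · rintro ⟨⟨t, u⟩, ⟨⟨ht0, htr⟩, hu⟩, rfl⟩
      rw [mem_sphere_zero_iff_norm] at hu
      constructor
      · rw [mem_ball_zero_iff, norm_smul, hu, mul_one, Real.norm_eq_abs, abs_of_pos ht0]
        exact htr
      · simp only [mem_singleton_iff]
        intro h
        have hu0 : u ≠ 0 := by intro h'; rw [h', norm_zero] at hu; norm_num at hu
        exact hu0 (by simpa [ne_of_gt ht0] using smul_eq_zero.mp h)
    · rintro ⟨hx, hx0⟩
      rw [mem_ball_zero_iff] at hx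
      simp only [mem_singleton_iff] at hx0
      have hn : 0 < ‖x‖ := norm_pos_iff.mpr hx0
      refine ⟨(‖x‖, ‖x‖⁻¹ • x), ⟨⟨hn, hx⟩, ?_⟩, ?_⟩
      · rw [mem_sphere_zero_iff_norm, norm_smul, norm_inv, norm_norm,
          inv_mul_cancel₀ (ne_of_gt hn)]
      · simp only [smul_smul, mul_inv_cancel₀ (ne_of_gt hn), one_smul]
  rwa [heq] at himg

lemma aux_int_const {X : Type*} [TopologicalSpace X] {s : Set X} (hs : IsPreconnected s)
    {f : X → ℝ} (hf : ContinuousOn f s) (hint : ∀ x ∈ s, ∃ k : ℤ, f x = k) :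
    ∀ x ∈ s, ∀ y ∈ s, f x = f y := by
  have himg : IsPreconnected (f '' s) := hs.image f hf
  have hord := himg.ordConnected
  have key : ∀ a b : ℤ, a < b → (a:ℝ) ∈ f '' s → (b:ℝ) ∈ f '' s → False := by
    intro a b hab ha hb
    have hmem : ((a:ℝ) + 1/2) ∈ Icc (a:ℝ) (b:ℝ) := by
      constructor
      · linarith
      · have : (a:ℝ) + 1 ≤ (b:ℝ) := by exact_mod_cast Int.add_one_le_iff.mpr hab
        linarith
    obtain ⟨z, hz, hfz⟩ := hord.out ha hb hmem
    obtain ⟨k, hk⟩ := hint z hz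
    rw [hk] at hfz
    have : (2*k : ℝ) = 2*a + 1 := by linarith
    have h2 : (2*k : ℤ) = 2*a + 1 := by exact_mod_cast this
    omega
  intro x hx y hy
  obtain ⟨m, hm⟩ := hint x hx
  obtain ⟨n, hn⟩ := hint y hy
  rw [hm, hn]
  rcases lt_trichotomy m n with h | h | h
  · exact absurd (key m n h (hm ▸ mem_image_of_mem f hx) (hn ▸ mem_image_of_mem f hy)) id
  · rw [h]
  · exact absurd (key n m h (hn ▸ mem_image_of_mem f hy) (hm ▸ mem_image_of_mem f hx)) id

lemma aux_two_pi_I_ne : (2 * (Real.pi:ℂ) * Complex.I) ≠ 0 := by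
  simp [Real.pi_ne_zero, Complex.I_ne_zero, Complex.ofReal_ne_zero]

/-- If `exp ∘ p = exp ∘ q` on a preconnected set and both are continuous, then `p - q`
is constant on the set. -/
lemma aux_exp_eq {s : Set ℂ} (hs : IsPreconnected s) {p q : ℂ → ℂ}
    (hp : ContinuousOn p s) (hq : ContinuousOn q s)
    (h : ∀ x ∈ s, Complex.exp (p x) = Complex.exp (q x)) :
    ∀ x ∈ s, ∀ y ∈ s, p x - q x = p y - q y := by
  have hint : ∀ x ∈ s, ∃ n : ℤ, p x - q x = n * (2 * (Real.pi:ℂ) * Complex.I) := by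
    intro x hx
    have h1 : Complex.exp (p x - q x) = 1 := by
      rw [Complex.exp_sub, h x hx, div_self (Complex.exp_ne_zero _)]
    obtain ⟨n, hn⟩ := Complex.exp_eq_one_iff.mp h1
    exact ⟨n, hn⟩
  set φ : ℂ → ℝ := fun x => ((p x - q x) / (2 * (Real.pi:ℂ) * Complex.I)).re with hφ
  have hφint : ∀ x ∈ s, ∃ k : ℤ, φ x = k := by
    intro x hx
    obtain ⟨n, hn⟩ := hint x hx
    refine ⟨n, ?_⟩
    rw [hφ]
    simp only [hn, mul_div_assoc, div_self aux_two_pi_I_ne, mul_one, Complex.intCast_re]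
  have hφcont : ContinuousOn φ s :=
    (Complex.continuous_re.comp_continuousOn ((hp.sub hq).div_const _))
  have hconst := aux_int_const hs hφcont hφint
  intro x hx y hy
  obtain ⟨n, hn⟩ := hint x hx
  obtain ⟨n', hn'⟩ := hint y hy
  have e1 : φ x = n := by
    rw [hφ]; simp only [hn, mul_div_assoc, div_self aux_two_pi_I_ne, mul_one, Complex.intCast_re]
  have e2 : φ y = n' := by
    rw [hφ]; simp only [hn', mul_div_assoc, div_self aux_two_pi_I_ne, mul_one, Complex.intCast_re]
  have : (n:ℝ) = (n':ℝ) := by rw [← e1, ← e2]; exact hconst x hx y hy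
  have : n = n' := by exact_mod_cast this
  rw [hn, hn', this]

/-- A continuous local section of `exp` around any nonzero point. -/
lemma aux_exp_section {w : ℂ} (hw : w ≠ 0) :
    ∃ (T : Set ℂ) (ψ : ℂ → ℂ), IsOpen T ∧ w ∈ T ∧ ContinuousOn ψ T ∧
      (∀ y ∈ T, Complex.exp (ψ y) = y) ∧ ψ w = Complex.log w := by
  have hd : HasStrictDerivAt Complex.exp (Complex.exp (Complex.log w)) (Complex.log w) :=
    Complex.hasStrictDerivAt_exp _
  have hne : Complex.exp (Complex.log w) ≠ 0 := Complex.exp_ne_zero _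
  have hE := hd.hasStrictFDerivAt_equiv hne
  set Φ := HasStrictFDerivAt.toOpenPartialHomeomorph _ hE with hΦ
  have hcoe : ⇑Φ = Complex.exp := rfl
  refine ⟨Φ.target, ⇑Φ.symm, Φ.open_target, ?_, Φ.continuousOn_symm, ?_, ?_⟩
  · have h2 : w = Complex.exp (Complex.log w) := (Complex.exp_log hw).symm
    rw [h2]
    exact hE.image_mem_toOpenPartialHomeomorph_target
  · intro y hy
    have := Φ.right_inv hy
    rwa [hcoe] at this
  · have h3 := Φ.left_inv hE.mem_toOpenPartialHomeomorph_source
    rw [hcoe] at h3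
    conv_lhs => rw [← Complex.exp_log hw]
    exact h3

/-- Factorization lemma: a holomorphic function `h` on a punctured disc such that
`Re (h x) - b * log ‖x‖` is bounded satisfies `exp (h x) = x ^ m * W x` near `0` with `W`
nonvanishing, and `b = m`. -/
lemma aux_factor {ρ : ℝ} (hρ : 0 < ρ) {h : ℂ → ℂ}
    (hd : ∀ x ∈ ball (0:ℂ) ρ \ {0}, DifferentiableAt ℂ h x) {b M : ℝ}
    (hb : ∀ x ∈ ball (0:ℂ) ρ \ {0}, |(h x).re - b * Real.log ‖x‖| ≤ M) :
    ∃ (m : ℤ) (ρ' : ℝ) (W : ℂ → ℂ), 0 < ρ' ∧ ρ' ≤ ρ ∧ (b : ℝ) = (m : ℝ) ∧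
      (∀ x ∈ ball (0:ℂ) ρ', ContinuousAt W x ∧ W x ≠ 0) ∧
      (∀ x ∈ ball (0:ℂ) ρ' \ {0}, Complex.exp (h x) = x ^ m * W x) := by
  set δ₁ : ℝ := min ρ 1 with hδ₁def
  have hδ₁ : 0 < δ₁ := lt_min hρ one_pos
  have hδ₁ρ : δ₁ ≤ ρ := min_le_left _ _
  have hδ₁1 : δ₁ ≤ 1 := min_le_right _ _
  have hsub : ball (0:ℂ) δ₁ \ {0} ⊆ ball (0:ℂ) ρ \ {0} :=
    diff_subset_diff_left (ball_subset_ball hδ₁ρ)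
  set N : ℕ := ⌈|b|⌉₊ with hNdef
  have hNb : 0 ≤ (N:ℝ) + b := by
    have h1 : |b| ≤ (N:ℝ) := Nat.le_ceil _
    have h2 : -b ≤ |b| := neg_le_abs b
    linarith
  set v : ℂ → ℂ := fun x => x ^ N * Complex.exp (h x) with hvdef
  -- v is bounded on the punctured disc
  have hvb : ∀ x ∈ ball (0:ℂ) δ₁ \ {0}, ‖v x‖ ≤ Real.exp M := by
    intro x hx
    have hx0 : x ≠ 0 := hx.2
    have ht0 : 0 < ‖x‖ := norm_pos_iff.mpr hx0
    have ht1 : ‖x‖ < 1 := lt_of_lt_of_le (mem_ball_zero_iff.mp hx.1) hδ₁1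
    have hre : (h x).re ≤ M + b * Real.log ‖x‖ := by
      have := hb x (hsub hx)
      have := abs_le.mp this
      linarith [this.2]
    have e1 : ‖v x‖ = ‖x‖ ^ N * Real.exp ((h x).re) := by
      rw [hvdef]
      simp only [norm_mul, norm_pow, Complex.norm_exp]
    rw [e1]
    have e2 : ‖x‖ ^ N * Real.exp ((h x).re) ≤ ‖x‖ ^ N * Real.exp (M + b * Real.log ‖x‖) :=
      mul_le_mul_of_nonneg_left (Real.exp_le_exp.mpr hre) (by positivity)
    refine e2.trans ?_
    have e3 : Real.exp (M + b * Real.log ‖x‖) = Real.exp M * ‖x‖ ^ b := by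
      rw [Real.exp_add]
      congr 1
      rw [Real.rpow_def_of_pos ht0, mul_comm]
    rw [e3]
    have e4 : ‖x‖ ^ N * (Real.exp M * ‖x‖ ^ b) = Real.exp M * (‖x‖ ^ ((N:ℝ) + b)) := by
      rw [Real.rpow_add ht0, ← Real.rpow_natCast ‖x‖ N]
      ring
    rw [e4]
    have e5 : ‖x‖ ^ ((N:ℝ) + b) ≤ 1 :=
      Real.rpow_le_one (le_of_lt ht0) (le_of_lt ht1) hNb
    nlinarith [Real.exp_pos M]
  -- v is differentiable on the punctured disc
  have hvd : DifferentiableOn ℂ v (ball (0:ℂ) δ₁ \ {0}) := by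
    intro x hx
    exact (((differentiableAt_id.pow N).mul ((hd x (hsub hx)).cexp))).differentiableWithinAt
  -- extend across the puncture
  set V : ℂ → ℂ := Function.update v 0 (limUnder (𝓝[≠] (0:ℂ)) v) with hVdef
  have hV : DifferentiableOn ℂ V (ball (0:ℂ) δ₁) := by
    apply Complex.differentiableOn_update_limUnder_of_bddAbove
      (isOpen_ball.mem_nhds (mem_ball_self hδ₁)) hvd
    refine ⟨Real.exp M, ?_⟩
    rintro y ⟨x, hx, rfl⟩
    exact hvb x hx
  have hVv : ∀ x : ℂ, x ≠ 0 → V x = v x := fun x hx => Function.update_of_ne hx _ _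
  have hA : AnalyticAt ℂ V 0 := hV.analyticAt (isOpen_ball.mem_nhds (mem_ball_self hδ₁))
  -- the order of V at 0 is finite
  have ho : analyticOrderAt V 0 ≠ ⊤ := by
    intro hcon
    rw [analyticOrderAt_eq_top] at hcon
    have h1 : ∀ᶠ z in 𝓝[≠] (0:ℂ), V z = 0 := hcon.filter_mono nhdsWithin_le_nhds
    have h2 : ∀ᶠ z in 𝓝[≠] (0:ℂ), z ≠ (0:ℂ) := eventually_mem_nhdsWithin
    obtain ⟨z, hz1, hz2⟩ := (h1.and h2).exists
    rw [hVv z hz2, hvdef] at hz1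
    exact (mul_ne_zero (pow_ne_zero _ hz2) (Complex.exp_ne_zero _)) hz1
  obtain ⟨m', hm'⟩ := WithTop.ne_top_iff_exists.mp ho
  obtain ⟨W, hWa, hW0, hWeq⟩ := (hA.analyticOrderAt_eq_natCast (n := m')).mp hm'.symm
  -- choose a radius on which everything holds
  have hWc : ∀ᶠ x in 𝓝 (0:ℂ), ContinuousAt W x := by
    filter_upwards [hWa.eventually_analyticAt] with x hx using hx.continuousAt
  have hball : ∀ᶠ x in 𝓝 (0:ℂ), x ∈ ball (0:ℂ) δ₁ := isOpen_ball.eventually_mem (mem_ball_self hδ₁)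
  obtain ⟨ρ', hρ'0, hρ'⟩ := Metric.eventually_nhds_iff_ball.mp ((hWeq.and hWc).and hball)
  set ρ'' : ℝ := min ρ' δ₁ with hρ''def
  have hρ''0 : 0 < ρ'' := lt_min hρ'0 hδ₁
  have hρ''sub : ∀ x ∈ ball (0:ℂ) ρ'', (V x = (x - 0) ^ m' • W x ∧ ContinuousAt W x)
      ∧ x ∈ ball (0:ℂ) δ₁ := by
    intro x hx
    exact hρ' x (by simpa using lt_of_lt_of_le (mem_ball_zero_iff.mp hx) (min_le_left _ _))
  set m : ℤ := (m' : ℤ) - (N : ℤ) with hmdef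
  -- the key factorization identity
  have hkey : ∀ x ∈ ball (0:ℂ) ρ'' \ {0}, Complex.exp (h x) = x ^ m * W x := by
    intro x hx
    have hx0 : x ≠ 0 := hx.2
    have h1 := (hρ''sub x hx.1).1.1
    rw [hVv x hx0, hvdef] at h1
    simp only [sub_zero, smul_eq_mul] at h1
    -- h1 : x ^ N * exp (h x) = x ^ m' * W x
    have hzN : (x:ℂ) ^ (N:ℤ) ≠ 0 := zpow_ne_zero _ hx0
    rw [hmdef, zpow_sub₀ hx0, zpow_natCast, zpow_natCast, div_mul_eq_mul_div,
      eq_div_iff (pow_ne_zero N hx0)]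
    linear_combination h1
  -- W is nonvanishing on the small ball
  have hWne : ∀ x ∈ ball (0:ℂ) ρ'', W x ≠ 0 := by
    intro x hx
    by_cases hx0 : x = 0
    · rwa [hx0]
    · intro hcon
      have := hkey x ⟨hx, hx0⟩
      rw [hcon, mul_zero] at this
      exact Complex.exp_ne_zero _ this
  -- b = m
  have hbm : (b:ℝ) = (m:ℝ) := by
    by_contra hne
    have hWcont : ContinuousAt W 0 := (hρ''sub 0 (mem_ball_self hρ''0)).1.2
    set w : ℝ := ‖W 0‖ with hwdef
    have hw0 : 0 < w := norm_pos_iff.mpr hW0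
    have hev : ∀ᶠ x in 𝓝 (0:ℂ), ‖W x - W 0‖ < w / 2 := by
      have : Metric.ball (W 0) (w/2) ∈ 𝓝 (W 0) := ball_mem_nhds _ (by linarith)
      filter_upwards [hWcont.eventually_mem this] with x hx
      rw [← dist_eq_norm]
      exact mem_ball.mp hx
    obtain ⟨ρ₃, hρ₃0, hρ₃⟩ := Metric.eventually_nhds_iff_ball.mp hev
    set K : ℝ := max |Real.log (w/2)| |Real.log (3*w/2)| with hKdef
    have hbound : ∀ x ∈ ball (0:ℂ) (min ρ₃ ρ'') \ {0},
        |(b - (m:ℝ)) * Real.log ‖x‖| ≤ M + K := by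
      intro x hx
      have hx0 : x ≠ 0 := hx.2
      have hxρ₃ : x ∈ ball (0:ℂ) ρ₃ := by
        exact mem_ball_zero_iff.mpr (lt_of_lt_of_le (mem_ball_zero_iff.mp hx.1) (min_le_left _ _))
      have hxρ'' : x ∈ ball (0:ℂ) ρ'' := by
        exact mem_ball_zero_iff.mpr (lt_of_lt_of_le (mem_ball_zero_iff.mp hx.1) (min_le_right _ _))
      have ht0 : 0 < ‖x‖ := norm_pos_iff.mpr hx0
      -- bounds on ‖W x‖
      have hWx := hρ₃ x hxρ₃
      have hWlo : w/2 ≤ ‖W x‖ := by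
        have := norm_sub_norm_le (W 0) (W x)
        rw [norm_sub_rev] at hWx
        simp only [← hwdef] at this ⊢
        linarith
      have hWhi : ‖W x‖ ≤ 3*w/2 := by
        have := norm_sub_norm_le (W x) (W 0)
        simp only [← hwdef] at this ⊢
        linarith
      have hlogW : |Real.log ‖W x‖| ≤ K := by
        rw [hKdef]
        exact abs_le_max_abs_abs (Real.log_le_log (by linarith) hWlo)
          (Real.log_le_log (lt_of_lt_of_le (by linarith) hWlo) hWhi)
      -- Re (h x) = m log ‖x‖ + log ‖W x‖
      have hre : (h x).re = (m:ℝ) * Real.log ‖x‖ + Real.log ‖W x‖ := by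
        have h1 := hkey x ⟨hxρ'', hx0⟩
        have h2 : Real.exp ((h x).re) = ‖Complex.exp (h x)‖ := by
          rw [Complex.norm_exp]
        have h3 : ‖Complex.exp (h x)‖ = ‖x‖ ^ m * ‖W x‖ := by
          rw [h1, norm_mul, norm_zpow]
        have h4 : Real.log (Real.exp ((h x).re)) = Real.log (‖x‖ ^ m * ‖W x‖) := by
          rw [h2, h3]
        rw [Real.log_exp, Real.log_mul (zpow_ne_zero _ (ne_of_gt ht0))
          (ne_of_gt (lt_of_lt_of_le (by linarith) hWlo)), Real.log_zpow] at h4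
        exact h4
      have hbx := hb x ⟨mem_ball_zero_iff.mpr (lt_of_lt_of_le (mem_ball_zero_iff.mp hx.1)
        (le_trans (min_le_right _ _) (le_trans (min_le_right _ _) hδ₁ρ))), hx0⟩
      -- |(h x).re - b log| ≤ M and (h x).re = m log + log W
      have e : (b - (m:ℝ)) * Real.log ‖x‖ = -((h x).re - b * Real.log ‖x‖) + Real.log ‖W x‖ := by
        rw [hre]; ring
      rw [e]
      calc |-((h x).re - b * Real.log ‖x‖) + Real.log ‖W x‖|
          ≤ |-((h x).re - b * Real.log ‖x‖)| + |Real.log ‖W x‖| := abs_add_le _ _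
        _ ≤ M + K := by rw [abs_neg]; exact add_le_add hbx hlogW
    -- now derive a contradiction by taking ‖x‖ small
    have hd0 : 0 < |b - (m:ℝ)| := abs_pos.mpr (sub_ne_zero.mpr hne)
    set t : ℝ := min ((min ρ₃ ρ'')/2) (Real.exp (-(M + K + 1)/|b - (m:ℝ)|)) with htdef
    have ht0 : 0 < t := lt_min (by positivity) (Real.exp_pos _)
    have hxmem : (t:ℂ) ∈ ball (0:ℂ) (min ρ₃ ρ'') \ {0} := by
      constructor
      · rw [mem_ball_zero_iff, Complex.norm_real, Real.norm_eq_abs, abs_of_pos ht0]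
        calc t ≤ (min ρ₃ ρ'')/2 := min_le_left _ _
          _ < min ρ₃ ρ'' := by
              have : 0 < min ρ₃ ρ'' := lt_min hρ₃0 hρ''0
              linarith
      · simp only [mem_singleton_iff, Complex.ofReal_eq_zero]
        exact ne_of_gt ht0
    have hlogt : Real.log t ≤ -(M + K + 1)/|b - (m:ℝ)| := by
      calc Real.log t ≤ Real.log (Real.exp (-(M + K + 1)/|b - (m:ℝ)|)) :=
            Real.log_le_log ht0 (min_le_right _ _)
        _ = -(M + K + 1)/|b - (m:ℝ)| := Real.log_exp _
    have hMK : 0 ≤ M + K := by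
      have h1 := hbound _ hxmem
      exact le_trans (abs_nonneg _) h1
    have hcalc := hbound _ hxmem
    rw [Complex.norm_real, Real.norm_eq_abs, abs_of_pos ht0] at hcalc
    rw [abs_mul] at hcalc
    have hlogtneg : Real.log t ≤ 0 :=
      le_trans hlogt (div_nonpos_of_nonpos_of_nonneg (by linarith) (abs_nonneg _))
    have hlogt' : (M + K + 1)/|b - (m:ℝ)| ≤ |Real.log t| := by
      rw [abs_of_nonpos hlogtneg]
      have h5 : -(M + K + 1)/|b - (m:ℝ)| = -((M + K + 1)/|b - (m:ℝ)|) := by ring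
      rw [h5] at hlogt
      linarith
    have : M + K + 1 ≤ |b - (m:ℝ)| * |Real.log t| := by
      rw [← div_le_iff₀' hd0]
      exact hlogt'
    linarith
  exact ⟨m, ρ'', W, hρ''0, le_trans (min_le_right _ _) hδ₁ρ, hbm,
    fun x hx => ⟨(hρ''sub x hx).1.2, hWne x hx⟩, hkey⟩

/-- a multivalued holomorphic function on a punctured disc whose
monodromy is a real constant and whose imaginary part is bounded is single-valued
and extends holomorphically across the puncture. -/
theorem stmt_5
    (δ : ℝ) (hδ : 0 < δ) (C : ℝ) (F : ℂ → ℂ)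
    (hF : DifferentiableOn ℂ F {z : ℂ | z.re < Real.log δ})
    (hmono : ∀ z : ℂ, z.re < Real.log δ →
      F (z + 2 * (Real.pi : ℂ) * Complex.I) = F z + (C : ℂ))
    (hbdd : ∃ M : ℝ, ∀ z : ℂ, z.re < Real.log δ → |(F z).im| ≤ M) :
    C = 0 ∧ ∃ g : ℂ → ℂ, DifferentiableOn ℂ g (ball 0 δ) ∧
      ∀ z : ℂ, z.re < Real.log δ → F z = g (Complex.exp z) := by
  obtain ⟨M, hM⟩ := hbdd
  have hHopen : IsOpen {z : ℂ | z.re < Real.log δ} :=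
    isOpen_Iio.preimage Complex.continuous_re
  have hreΛ : ∀ (k : ℤ) (z : ℂ), (z + (k:ℂ) * (2 * (Real.pi:ℂ) * Complex.I)).re = z.re := by
    intro k z
    simp [Complex.add_re, Complex.mul_re, Complex.mul_im]
  set a : ℝ := C / (2 * Real.pi) with hadef
  have hCa : (C:ℝ) = 2 * Real.pi * a := by
    rw [hadef]; field_simp
  have hCaC : (C:ℂ) = 2 * (Real.pi:ℂ) * (a:ℂ) := by exact_mod_cast congrArg Complex.ofReal hCa
  set G : ℂ → ℂ := fun z => F z + Complex.I * (a:ℂ) * z with hGdef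
  have hGd : DifferentiableOn ℂ G {z : ℂ | z.re < Real.log δ} :=
    hF.add ((differentiable_id.const_mul (Complex.I * (a:ℂ))).differentiableOn)
  have hGmono : ∀ z : ℂ, z.re < Real.log δ →
      G (z + 2 * (Real.pi:ℂ) * Complex.I) = G z := by
    intro z hz
    show F (z + 2 * (Real.pi:ℂ) * Complex.I)
      + Complex.I * (a:ℂ) * (z + 2 * (Real.pi:ℂ) * Complex.I) = F z + Complex.I * (a:ℂ) * z
    rw [hmono z hz, hCaC]
    linear_combination (2*(Real.pi:ℂ)*(a:ℂ)) * Complex.I_sq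
  -- periodicity of G with all integer multiples of the period
  have hper : ∀ (k : ℤ) (z : ℂ), z.re < Real.log δ →
      G (z + (k:ℂ) * (2 * (Real.pi:ℂ) * Complex.I)) = G z := by
    intro k
    induction k using Int.induction_on with
    | zero => intro z hz; simp
    | succ n ih =>
      intro z hz
      have hmem : (z + ((n:ℤ):ℂ) * (2 * (Real.pi:ℂ) * Complex.I)).re < Real.log δ := by
        rw [hreΛ]; exact hz
      have h2 := hGmono _ hmem
      have e : z + ((n:ℤ):ℂ) * (2 * (Real.pi:ℂ) * Complex.I) + 2 * (Real.pi:ℂ) * Complex.I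
          = z + (((n:ℤ) + 1 : ℤ):ℂ) * (2 * (Real.pi:ℂ) * Complex.I) := by
        push_cast; ring
      rw [e] at h2
      rw [h2, ih z hz]
    | pred n ih =>
      intro z hz
      have hmem : (z + ((-(n:ℤ) - 1 : ℤ):ℂ) * (2 * (Real.pi:ℂ) * Complex.I)).re < Real.log δ := by
        rw [hreΛ]; exact hz
      have h2 := hGmono _ hmem
      have e : z + ((-(n:ℤ) - 1 : ℤ):ℂ) * (2 * (Real.pi:ℂ) * Complex.I)
          + 2 * (Real.pi:ℂ) * Complex.I
          = z + ((-(n:ℤ) : ℤ):ℂ) * (2 * (Real.pi:ℂ) * Complex.I) := by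
        push_cast; ring
      rw [e] at h2
      rw [← h2, ih z hz]
  set S : Set ℂ := ball (0:ℂ) δ \ {0} with hSdef
  have hSopen : IsOpen S := isOpen_ball.sdiff isClosed_singleton
  have hlogmem : ∀ x ∈ S, (Complex.log x).re < Real.log δ := by
    intro x hx
    rw [Complex.log_re]
    exact Real.log_lt_log (norm_pos_iff.mpr hx.2)
      (by exact mem_ball_zero_iff.mp hx.1)
  set g1 : ℂ → ℂ := fun x => G (Complex.log x) with hg1def
  have hg1F : ∀ z : ℂ, z.re < Real.log δ → g1 (Complex.exp z) = G z := by
    intro z hz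
    have hexpz : Complex.exp (Complex.log (Complex.exp z)) = Complex.exp z :=
      Complex.exp_log (Complex.exp_ne_zero z)
    obtain ⟨k, hk⟩ := Complex.exp_eq_exp_iff_exists_int.mp hexpz
    show G (Complex.log (Complex.exp z)) = G z
    rw [hk]
    exact hper k z hz
  have hexpmem : ∀ z : ℂ, z.re < Real.log δ → Complex.exp z ∈ S := by
    intro z hz
    constructor
    · rw [mem_ball_zero_iff, Complex.norm_exp]
      calc Real.exp z.re < Real.exp (Real.log δ) := Real.exp_lt_exp.mpr hz
        _ = δ := Real.exp_log hδ
    · exact Complex.exp_ne_zero z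
  -- g1 is differentiable on S
  have hg1diff : ∀ x ∈ S, DifferentiableAt ℂ g1 x := by
    intro x hx
    set z0 := Complex.log x with hz0def
    have hz0 : z0.re < Real.log δ := hlogmem x hx
    have hexp0 : Complex.exp z0 = x := Complex.exp_log hx.2
    have hd : HasStrictDerivAt Complex.exp (Complex.exp z0) z0 :=
      Complex.hasStrictDerivAt_exp z0
    have hne : Complex.exp z0 ≠ 0 := Complex.exp_ne_zero z0
    have hE := hd.hasStrictFDerivAt_equiv hne
    obtain ⟨ψ, hcont, hψx, hright, hψd⟩ : ∃ ψ : ℂ → ℂ, ContinuousAt ψ x ∧ ψ x = z0 ∧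
        (∀ᶠ y in 𝓝 x, Complex.exp (ψ y) = y) ∧ DifferentiableAt ℂ ψ x := by
      refine ⟨hE.localInverse Complex.exp _ z0, ?_, ?_, ?_, ?_⟩
      · rw [← hexp0]; exact hE.localInverse_continuousAt
      · rw [← hexp0]; exact hE.localInverse_apply_image
      · rw [← hexp0]; exact hE.eventually_right_inverse
      · rw [← hexp0]; exact hE.to_localInverse.differentiableAt
    have hmemH : ∀ᶠ y in 𝓝 x, ψ y ∈ {z : ℂ | z.re < Real.log δ} := by
      apply hcont.eventually_mem
      rw [hψx]
      exact hHopen.mem_nhds hz0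
    have hSmem : ∀ᶠ y in 𝓝 x, y ∈ S := hSopen.eventually_mem hx
    have heq : (fun y => G (ψ y)) =ᶠ[𝓝 x] g1 := by
      filter_upwards [hright, hmemH, hSmem] with y h1 h2 h3
      have hly : Complex.exp (Complex.log y) = Complex.exp (ψ y) := by
        rw [Complex.exp_log h3.2, h1]
      obtain ⟨k, hk⟩ := Complex.exp_eq_exp_iff_exists_int.mp hly
      show G (ψ y) = G (Complex.log y)
      rw [hk, hper k (ψ y) h2]
    have hGdAt : DifferentiableAt ℂ G z0 := hGd.differentiableAt (hHopen.mem_nhds hz0)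
    have hcomp : DifferentiableAt ℂ (fun y => G (ψ y)) x := by
      have : DifferentiableAt ℂ G (ψ x) := by rwa [hψx]
      exact this.comp x hψd
    exact hcomp.congr_of_eventuallyEq heq.symm
  -- the boundedness hypothesis for the factorization lemma
  have hIm : ∀ x ∈ S, |((fun x => -Complex.I * g1 x) x).re - a * Real.log ‖x‖| ≤ M := by
    intro x hx
    have h1 : ((-Complex.I * g1 x)).re = (g1 x).im := by
      simp [Complex.mul_re]
    have h2 : (g1 x).im = (F (Complex.log x)).im + a * Real.log ‖x‖ := by
      show (G (Complex.log x)).im = _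
      rw [hGdef]
      simp only [Complex.add_im, Complex.mul_im, Complex.mul_re, Complex.I_re, Complex.I_im,
        Complex.ofReal_re, Complex.ofReal_im, Complex.log_re]
      ring
    rw [h1, h2]
    simpa using hM _ (hlogmem x hx)
  obtain ⟨m, ρ', W, hρ'0, hρ'δ, ham, hWprop, hkey⟩ :=
    aux_factor hδ (fun x hx => ((hg1diff x hx).const_mul (-Complex.I))) hIm
  -- a local section of exp around W 0
  obtain ⟨T, ψ, hTopen, hT0, hψcont, hψsec, hψval⟩ :=
    aux_exp_section (hWprop 0 (mem_ball_self hρ'0)).2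
  -- choose a smaller radius where W lands in T and ψ ∘ W is close to its value at 0
  have hWT : ∀ᶠ x in 𝓝 (0:ℂ), W x ∈ T :=
    (hWprop 0 (mem_ball_self hρ'0)).1.eventually_mem (hTopen.mem_nhds hT0)
  have hψWcont : ContinuousAt (fun x => ψ (W x)) 0 :=
    (hψcont.continuousAt (hTopen.mem_nhds hT0)).comp (hWprop 0 (mem_ball_self hρ'0)).1
  have hψWb : ∀ᶠ x in 𝓝 (0:ℂ), ‖ψ (W x) - ψ (W 0)‖ < 1 := by
    have := hψWcont.eventually_mem (ball_mem_nhds (ψ (W 0)) one_pos)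
    filter_upwards [this] with x hx
    rw [← dist_eq_norm]
    exact mem_ball.mp hx
  have hρ'mem : ∀ᶠ x in 𝓝 (0:ℂ), x ∈ ball (0:ℂ) ρ' :=
    isOpen_ball.eventually_mem (mem_ball_self hρ'0)
  obtain ⟨ρ₂', hρ₂'0, hρ₂'⟩ := Metric.eventually_nhds_iff_ball.mp ((hWT.and hψWb).and hρ'mem)
  set ρ₂ : ℝ := min ρ₂' ρ' with hρ₂def
  have hρ₂0 : 0 < ρ₂ := lt_min hρ₂'0 hρ'0
  have hρ₂ρ' : ρ₂ ≤ ρ' := min_le_right _ _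
  have hρ₂δ : ρ₂ ≤ δ := le_trans hρ₂ρ' hρ'δ
  have hball₂ : ∀ x ∈ ball (0:ℂ) ρ₂, (W x ∈ T ∧ ‖ψ (W x) - ψ (W 0)‖ < 1) ∧ x ∈ ball (0:ℂ) ρ' :=
    fun x hx => hρ₂' x (mem_ball_zero_iff.mpr
      (lt_of_lt_of_le (mem_ball_zero_iff.mp hx) (min_le_left _ _)))
  -- prove m = 0 using the periodicity upstairs
  have hm0 : m = 0 := by
    set s₁ : Set ℂ := {z : ℂ | z.re < Real.log ρ₂} with hs₁def
    have hs₁pre : IsPreconnected s₁ := (convex_halfSpace_re_lt _).isPreconnected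
    have hs₁δ : ∀ z ∈ s₁, z.re < Real.log δ := by
      intro z hz
      exact lt_of_lt_of_le hz (Real.log_le_log hρ₂0 hρ₂δ)
    have hexps₁ : ∀ z ∈ s₁, Complex.exp z ∈ ball (0:ℂ) ρ₂ \ {0} := by
      intro z hz
      refine ⟨?_, Complex.exp_ne_zero z⟩
      rw [mem_ball_zero_iff, Complex.norm_exp]
      calc Real.exp z.re < Real.exp (Real.log ρ₂) := Real.exp_lt_exp.mpr hz
        _ = ρ₂ := Real.exp_log hρ₂0
    set p : ℂ → ℂ := fun z => -Complex.I * G z - (m:ℂ) * z with hpdef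
    set q : ℂ → ℂ := fun z => ψ (W (Complex.exp z)) with hqdef
    have hpq : ∀ z ∈ s₁, Complex.exp (p z) = Complex.exp (q z) := by
      intro z hz
      have hx := hexps₁ z hz
      have hxρ' : Complex.exp z ∈ ball (0:ℂ) ρ' \ {0} :=
        ⟨(hball₂ _ hx.1).2, hx.2⟩
      have h1 : Complex.exp (-Complex.I * g1 (Complex.exp z))
          = (Complex.exp z) ^ m * W (Complex.exp z) := hkey _ hxρ'
      rw [hg1F z (hs₁δ z hz)] at h1
      have h2 : Complex.exp ((m:ℂ) * z) = (Complex.exp z) ^ m := Complex.exp_int_mul z m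
      have h3 : Complex.exp (q z) = W (Complex.exp z) := hψsec _ (hball₂ _ hx.1).1.1
      rw [hpdef, Complex.exp_sub, h1, h2, h3]
      field_simp [zpow_ne_zero m (Complex.exp_ne_zero z)]
    have hpcont : ContinuousOn p s₁ := by
      apply ContinuousOn.sub
      · exact continuousOn_const.mul ((hGd.continuousOn).mono (fun z hz => hs₁δ z hz))
      · exact continuousOn_const.mul continuousOn_id
    have hqcont : ContinuousOn q s₁ := by
      intro z hz
      have hx := hexps₁ z hz
      have hWTz : W (Complex.exp z) ∈ T := (hball₂ _ hx.1).1.1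
      have hWc : ContinuousAt W (Complex.exp z) :=
        (hWprop _ ((hball₂ _ hx.1).2)).1
      exact (((hψcont.continuousAt (hTopen.mem_nhds hWTz)).comp hWc).comp
        Complex.continuous_exp.continuousAt).continuousWithinAt
    set z₀ : ℂ := ((Real.log ρ₂ - 1 : ℝ) : ℂ) with hz₀def
    have hz₀ : z₀ ∈ s₁ := by simp [hs₁def, hz₀def]
    set z₁ : ℂ := z₀ + 2 * (Real.pi:ℂ) * Complex.I with hz₁def
    have hz₁ : z₁ ∈ s₁ := by
      have : z₁.re = z₀.re := by
        have := hreΛ 1 z₀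
        simpa [hz₁def] using this
      show z₁.re < Real.log ρ₂
      rw [this]
      simpa [hz₀def] using hz₀
    have hconst := aux_exp_eq hs₁pre hpcont hqcont hpq z₀ hz₀ z₁ hz₁
    have hq01 : q z₁ = q z₀ := by
      have he1 : Complex.exp z₁ = Complex.exp z₀ := by
        rw [hz₁def, Complex.exp_add, Complex.exp_two_pi_mul_I, mul_one]
      show ψ (W (Complex.exp z₁)) = ψ (W (Complex.exp z₀))
      rw [he1]
    have hp01 : p z₁ = p z₀ - (m:ℂ) * (2 * (Real.pi:ℂ) * Complex.I) := by
      show -Complex.I * G z₁ - (m:ℂ) * z₁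
        = (-Complex.I * G z₀ - (m:ℂ) * z₀) - (m:ℂ) * (2 * (Real.pi:ℂ) * Complex.I)
      rw [hz₁def, hGmono z₀ (hs₁δ z₀ hz₀)]
      ring
    rw [hq01, hp01] at hconst
    have hmz : (m:ℂ) * (2 * (Real.pi:ℂ) * Complex.I) = 0 := by linear_combination hconst
    have : (m:ℂ) = 0 := by
      rcases mul_eq_zero.mp hmz with h | h
      · exact h
      · exact absurd h aux_two_pi_I_ne
    exact_mod_cast this
  have ha0 : a = 0 := by
    have : (a:ℝ) = (m:ℝ) := ham
    rw [hm0] at this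
    simpa using this
  have hC0 : C = 0 := by rw [hCa, ha0]; ring
  have hGF : ∀ z : ℂ, G z = F z := by
    intro z
    rw [hGdef]
    simp [ha0]
  -- boundedness of g1 near 0 and removable singularity
  set s₂ : Set ℂ := ball (0:ℂ) ρ₂ \ {0} with hs₂def
  have hs₂S : s₂ ⊆ S := diff_subset_diff_left (ball_subset_ball hρ₂δ)
  have hs₂pre : IsPreconnected s₂ := aux_punctured_preconnected hρ₂0
  set p₂ : ℂ → ℂ := fun x => -Complex.I * g1 x with hp₂def
  set q₂ : ℂ → ℂ := fun x => ψ (W x) with hq₂def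
  have hpq₂ : ∀ x ∈ s₂, Complex.exp (p₂ x) = Complex.exp (q₂ x) := by
    intro x hx
    have hxρ' : x ∈ ball (0:ℂ) ρ' \ {0} := ⟨(hball₂ _ hx.1).2, hx.2⟩
    have h1 := hkey x hxρ'
    rw [hm0] at h1
    simp only [zpow_zero, one_mul] at h1
    rw [hp₂def, h1, hq₂def]
    exact (hψsec _ (hball₂ _ hx.1).1.1).symm
  have hp₂cont : ContinuousOn p₂ s₂ := by
    intro x hx
    exact (continuousAt_const.mul (hg1diff x (hs₂S hx)).continuousAt).continuousWithinAt
  have hq₂cont : ContinuousOn q₂ s₂ := by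
    intro x hx
    have hWc : ContinuousAt W x := (hWprop _ ((hball₂ _ hx.1).2)).1
    exact ((hψcont.continuousAt (hTopen.mem_nhds (hball₂ _ hx.1).1.1)).comp
      hWc).continuousWithinAt
  have hconst₂ := aux_exp_eq hs₂pre hp₂cont hq₂cont hpq₂
  set x₁ : ℂ := ((ρ₂/2 : ℝ) : ℂ) with hx₁def
  have hx₁ : x₁ ∈ s₂ := by
    constructor
    · rw [mem_ball_zero_iff, hx₁def, Complex.norm_real, Real.norm_eq_abs,
        abs_of_pos (by linarith)]
      linarith
    · simp only [mem_singleton_iff, hx₁def, Complex.ofReal_eq_zero]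
      intro h; linarith
  set c : ℂ := p₂ x₁ - q₂ x₁ with hcdef
  have hg1bdd : ∀ x ∈ s₂, ‖g1 x‖ ≤ ‖ψ (W 0)‖ + 1 + ‖c‖ := by
    intro x hx
    have h1 : p₂ x - q₂ x = c := hconst₂ x hx x₁ hx₁
    have h2 : ‖g1 x‖ = ‖p₂ x‖ := by
      rw [hp₂def]
      simp [norm_mul]
    have h3 : p₂ x = q₂ x + c := by rw [← h1]; ring
    rw [h2, h3]
    have h4 : ‖ψ (W x)‖ ≤ ‖ψ (W 0)‖ + 1 := by
      have h5 := (hball₂ _ hx.1).1.2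
      have h6 := norm_sub_norm_le (ψ (W x)) (ψ (W 0))
      linarith
    calc ‖q₂ x + c‖ ≤ ‖q₂ x‖ + ‖c‖ := norm_add_le _ _
      _ ≤ ‖ψ (W 0)‖ + 1 + ‖c‖ := by rw [hq₂def]; simp only []; linarith
  set g : ℂ → ℂ := Function.update g1 0 (limUnder (𝓝[≠] (0:ℂ)) g1) with hgdef
  have hg2 : DifferentiableOn ℂ g (ball (0:ℂ) ρ₂) := by
    apply Complex.differentiableOn_update_limUnder_of_bddAbove
      (isOpen_ball.mem_nhds (mem_ball_self hρ₂0))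
      (fun x hx => (hg1diff x (hs₂S hx)).differentiableWithinAt)
    refine ⟨‖ψ (W 0)‖ + 1 + ‖c‖, ?_⟩
    rintro y ⟨x, hx, rfl⟩
    exact hg1bdd x hx
  refine ⟨hC0, g, ?_, ?_⟩
  · intro x hx
    by_cases hx0 : x ∈ ball (0:ℂ) ρ₂
    · exact (hg2.differentiableAt (isOpen_ball.mem_nhds hx0)).differentiableWithinAt
    · have hxne : x ≠ 0 := fun h => hx0 (h ▸ mem_ball_self hρ₂0)
      have hev : g =ᶠ[𝓝 x] g1 := by
        filter_upwards [isClosed_singleton.isOpen_compl.eventually_mem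
          (by simpa using hxne : x ∈ ({(0:ℂ)}ᶜ : Set ℂ))] with y hy
        exact Function.update_of_ne (by simpa using hy) _ _
      exact ((hg1diff x ⟨hx, hxne⟩).congr_of_eventuallyEq hev).differentiableWithinAt
  · intro z hz
    have h1 : g (Complex.exp z) = g1 (Complex.exp z) :=
      Function.update_of_ne (Complex.exp_ne_zero z) _ _
    rw [h1, hg1F z hz, hGF]
end

section
/- Let P : ℂ → ℂ be a polynomial with deg P ≥ 2 such that 2πi·Σ_{p∈S} Res_p ∉ ℝ\{0} for every subset S of the zero set of P (i.e. P(w)∂/∂w ∈ 𝒳_∞). Let w₀ ∈ ℂ with P(w₀) ≠ 0, and suppose that the trajectory γ₀ : [0,∞) → ℂ with γ₀(0) = w₀ and γ₀'(t) = P(γ₀(t)) exists, is bounded, and converges to p (a zero of P) as t → ∞. Then there exists ε > 0 such that for every w ∈ B(w₀,ε) and every bounded differentiable curve γ : [0,∞) → ℂ with γ(0) = w and γ'(t) = P(γ(t)) for all t ≥ 0, one also has γ(t) → p as t → ∞. In other words, the forward-limit map ω is locally constant off the singular points and the finite-time escaping trajectories. -/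
open Metric Set Filter Topology
namespace Stmt9

lemma hasDerivAt_re' {f : ℝ → ℂ} {d : ℂ} {t : ℝ} (h : HasDerivAt f d t) :
    HasDerivAt (fun s => (f s).re) d.re t := by
  simpa [Function.comp_def] using (Complex.reCLM.hasFDerivAt.comp_hasDerivAt t h)

lemma hasDerivAt_im' {f : ℝ → ℂ} {d : ℂ} {t : ℝ} (h : HasDerivAt f d t) :
    HasDerivAt (fun s => (f s).im) d.im t := by
  simpa [Function.comp_def] using (Complex.imCLM.hasFDerivAt.comp_hasDerivAt t h)

lemma hasDerivAt_normSq {γ : ℝ → ℂ} {d : ℂ} {p : ℂ} {t : ℝ} (h : HasDerivAt γ d t) :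
    HasDerivAt (fun s => Complex.normSq (γ s - p)) (2 * ((starRingEnd ℂ) (γ t - p) * d).re) t := by
  have hu : HasDerivAt (fun s => γ s - p) d t := h.sub_const p
  have hre := hasDerivAt_re' hu
  have him := hasDerivAt_im' hu
  have H := (hre.fun_mul hre).fun_add (him.fun_mul him)
  have heq : (fun s => (γ s - p).re * (γ s - p).re + (γ s - p).im * (γ s - p).im)
      = fun s => Complex.normSq (γ s - p) := by
    funext s; rw [Complex.normSq_apply]
  rw [heq] at H
  refine H.congr_deriv ?_
  simp [Complex.mul_re, Complex.conj_re, Complex.conj_im]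
  ring

lemma mono_aux {φ : ℝ → ℝ} {a b c : ℝ} (hab : a ≤ b)
    (hcont : ContinuousOn φ (Icc a b))
    (hder : ∀ t ∈ Ioo a b, ∃ d, c ≤ d ∧ HasDerivAt φ d t) :
    φ a + c * (b - a) ≤ φ b := by
  have H : MonotoneOn (fun t => φ t - c * t) (Icc a b) := by
    apply monotoneOn_of_deriv_nonneg (convex_Icc a b)
    · exact hcont.sub (continuousOn_const.mul continuousOn_id)
    · intro t ht
      rw [interior_Icc] at ht
      obtain ⟨d, hcd, hd⟩ := hder t ht
      have : HasDerivAt (fun t => φ t - c * t) (d - c) t := by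
        simpa using hd.fun_sub ((hasDerivAt_id t).const_mul c)
      exact this.differentiableAt.differentiableWithinAt
    · intro t ht
      rw [interior_Icc] at ht
      obtain ⟨d, hcd, hd⟩ := hder t ht
      have hd' : HasDerivAt (fun t => φ t - c * t) (d - c) t := by
        simpa using hd.fun_sub ((hasDerivAt_id t).const_mul c)
      rw [hd'.deriv]; linarith
  have := H (left_mem_Icc.mpr hab) (right_mem_Icc.mpr hab) hab
  dsimp at this
  linarith

lemma cont_ball (Q : Polynomial ℂ) (p : ℂ) {η : ℝ} (hη : 0 < η) :
    ∃ r > 0, ∀ w ∈ closedBall p r, ‖Q.eval w - Q.eval p‖ ≤ η := by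
  have hc : ContinuousAt (fun w => Q.eval w) p := (Polynomial.continuous Q).continuousAt
  obtain ⟨δ, hδ, h⟩ := Metric.continuousAt_iff.mp hc η hη
  refine ⟨δ/2, by positivity, fun w hw => ?_⟩
  have : dist w p < δ := lt_of_le_of_lt (mem_closedBall.mp hw) (by linarith)
  have := h this
  rw [dist_eq_norm] at this
  exact this.le



lemma lip_aux (P : Polynomial ℂ) {R : ℝ} (hR : 0 ≤ R) :
    ∃ K : NNReal, LipschitzOnWith K (fun w => P.eval w) (closedBall (0:ℂ) R) := by
  obtain ⟨C, hC⟩ := (isCompact_closedBall (0:ℂ) R).exists_bound_of_continuousOn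
    (P.derivative.continuous).continuousOn
  have hC0 : 0 ≤ C := le_trans (norm_nonneg _) (hC 0 (mem_closedBall_self hR))
  refine ⟨C.toNNReal, ?_⟩
  apply Convex.lipschitzOnWith_of_nnnorm_deriv_le
    (fun x _ => P.differentiable.differentiableAt)
    (fun x hx => ?_) (convex_closedBall _ _)
  rw [← NNReal.coe_le_coe, coe_nnnorm, Real.coe_toNNReal C hC0, Polynomial.deriv]
  exact hC x hx

lemma lip_ball (P : Polynomial ℂ) (p : ℂ) :
    ∃ K : NNReal, LipschitzOnWith K (fun w => P.eval w) (closedBall p 1) := by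
  obtain ⟨K, hK⟩ := lip_aux P (R := ‖p‖ + 1) (by positivity)
  refine ⟨K, hK.mono fun z hz => ?_⟩
  rw [mem_closedBall] at hz ⊢
  calc dist z 0 ≤ dist z p + dist p 0 := dist_triangle _ _ _
    _ ≤ 1 + ‖p‖ := by rw [dist_zero_right]; exact add_le_add hz le_rfl
    _ = ‖p‖ + 1 := by ring

/-- A solution of `g' = P(g)` starting at a root `p` stays at `p`. -/
lemma const_of_root (P : Polynomial ℂ) {p : ℂ} (hp : P.eval p = 0) {b : ℝ} (hb : 0 ≤ b)
    {g : ℝ → ℂ} (hg : ContinuousOn g (Icc 0 b))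
    (hg' : ∀ t ∈ Ico 0 b, HasDerivWithinAt g (P.eval (g t)) (Ici t) t)
    (h0 : g 0 = p) : ∀ s ∈ Icc 0 b, g s = p := by
  obtain ⟨K, hK⟩ := lip_ball P p
  set E : Set ℝ := Icc 0 b ∩ g ⁻¹' {p} with hE
  have hEc : IsClosed E := hg.preimage_isClosed_of_isClosed isClosed_Icc isClosed_singleton
  set A : Set ℝ := {t | t ∈ Icc 0 b ∧ Icc 0 t ⊆ E} with hA
  have h0A : (0:ℝ) ∈ A := by
    refine ⟨left_mem_Icc.mpr hb, fun s hs => ?_⟩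
    have hs0 : s = 0 := le_antisymm hs.2 hs.1
    exact ⟨by rw [hs0]; exact left_mem_Icc.mpr hb, by rw [hs0]; exact h0⟩
  have hAne : A.Nonempty := ⟨0, h0A⟩
  have hAbdd : BddAbove A := ⟨b, fun t ht => ht.1.2⟩
  set m := sSup A with hm
  have hmI : m ∈ Icc 0 b := ⟨le_csSup hAbdd h0A, csSup_le hAne fun t ht => ht.1.2⟩
  have hlt : Ico 0 m ⊆ E := by
    intro u hu
    obtain ⟨t, htA, hut⟩ := exists_lt_of_lt_csSup hAne hu.2
    exact htA.2 ⟨hu.1, hut.le⟩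
  have hmE : m ∈ E := by
    rcases eq_or_lt_of_le hmI.1 with h0' | h0'
    · refine ⟨hmI, ?_⟩
      simp only [Set.mem_preimage, Set.mem_singleton_iff]
      rw [← h0', h0]
    · have hcl : m ∈ closure (Ico 0 m) := by
        rw [closure_Ico (ne_of_lt h0')]
        exact ⟨hmI.1, le_rfl⟩
      have : m ∈ closure E := closure_mono hlt hcl
      rwa [hEc.closure_eq] at this
  have hmA : m ∈ A := by
    refine ⟨hmI, fun s hs => ?_⟩
    rcases eq_or_lt_of_le hs.2 with h | h
    · rw [h]; exact hmE
    · exact hlt ⟨hs.1, h⟩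
  -- now show m = b
  rcases eq_or_lt_of_le hmI.2 with hmb | hmb
  · intro s hs; exact ((hmA.2 ⟨hs.1, hs.2.trans_eq hmb.symm⟩).2 : g s = p)
  · -- extend beyond m : contradiction with sSup
    exfalso
    have hgm : g m = p := hmE.2
    have hcw : ContinuousWithinAt g (Icc 0 b) m := hg m hmI
    obtain ⟨δ, hδ, hball⟩ := Metric.continuousWithinAt_iff.mp hcw 1 one_pos
    set b' := min b (m + δ/2) with hb'
    have hmb' : m < b' := lt_min hmb (by linarith)
    have hb'le : b' ≤ b := min_le_left _ _
    have hmem : ∀ s ∈ Icc m b', g s ∈ closedBall p 1 := by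
      intro s hs
      have hsI : s ∈ Icc 0 b := ⟨hmI.1.trans hs.1, hs.2.trans hb'le⟩
      have hds : dist s m < δ := by
        rw [Real.dist_eq, abs_of_nonneg (by linarith [hs.1])]
        have : s ≤ m + δ/2 := hs.2.trans (min_le_right _ _)
        linarith
      rw [mem_closedBall]
      calc dist (g s) p = dist (g s) (g m) := by rw [hgm]
        _ ≤ 1 := (hball hsI hds).le
    have heq : EqOn g (fun _ => p) (Icc m b') := by
      apply ODE_solution_unique_of_mem_Icc_right (v := fun _ w => P.eval w)
        (s := fun _ => closedBall p 1) (fun _ _ => hK)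
      · exact hg.mono (Icc_subset_Icc (hmI.1) hb'le)
      · intro t ht
        exact hg' t ⟨hmI.1.trans ht.1, lt_of_lt_of_le ht.2 hb'le⟩
      · intro t ht; exact hmem t ⟨ht.1, ht.2.le⟩
      · exact continuousOn_const
      · intro t ht
        simpa [hp] using (hasDerivWithinAt_const t (Ici t) p)
      · intro t ht; exact mem_closedBall_self zero_le_one
      · exact hgm
    have hb'A : b' ∈ A := by
      refine ⟨⟨hmI.1.trans hmb'.le, hb'le⟩, fun s hs => ?_⟩
      rcases le_or_gt s m with h | h
      · exact hmA.2 ⟨hs.1, h⟩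
      · exact ⟨⟨hs.1, hs.2.trans hb'le⟩, heq ⟨h.le, hs.2⟩⟩
    exact absurd (le_csSup hAbdd hb'A) (not_le.mpr hmb')

/-- A solution that starts off the zero set never reaches the root `p`. -/
lemma never_root (P : Polynomial ℂ) {γ : ℝ → ℂ}
    (hderiv : ∀ t : ℝ, 0 ≤ t → HasDerivWithinAt γ (P.eval (γ t)) (Set.Ici 0) t)
    (h0 : P.eval (γ 0) ≠ 0) {p : ℂ} (hp : P.eval p = 0) :
    ∀ t, 0 ≤ t → γ t ≠ p := by
  have hcont : ContinuousOn γ (Ici 0) := fun t ht => (hderiv t ht).continuousWithinAt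
  intro t₁ ht₁ heq
  rcases eq_or_lt_of_le ht₁ with h | h
  · rw [← h] at heq; rw [heq, hp] at h0; exact h0 rfl
  · set g : ℝ → ℂ := fun s => γ (t₁ - s) with hgdef
    have hgc : ContinuousOn g (Icc 0 t₁) := by
      apply hcont.comp (by fun_prop)
      intro s hs
      exact mem_Ici.mpr (by linarith [hs.2])
    have hg' : ∀ s ∈ Ico 0 t₁, HasDerivWithinAt g ((-P).eval (g s)) (Ici s) s := by
      intro s hs
      have hτ : 0 < t₁ - s := by linarith [hs.2]
      set u : ℝ → ℝ := fun s' => t₁ - s' with hu_def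
      have hu : HasDerivAt u (-1) s := by
        simpa [hu_def] using (hasDerivAt_id s).const_sub t₁
      have hγd : HasDerivAt γ (P.eval (γ (u s))) (u s) :=
        (hderiv (t₁ - s) hτ.le).hasDerivAt (Ici_mem_nhds hτ)
      have hcomp := HasDerivAt.scomp s hγd hu
      have h2 : HasDerivAt g (-(P.eval (γ (t₁ - s)))) s := by
        simpa [hgdef, hu_def, Function.comp_def] using hcomp
      have h3 : (-P).eval (g s) = -(P.eval (γ (t₁ - s))) := by
        simp [hgdef]
      rw [h3]
      exact h2.hasDerivWithinAt
    have := const_of_root (-P) (p := p) (by simp [hp]) h.le hgc hg' (by simp [hgdef, heq])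
    have hg0 : γ 0 = p := by simpa [hgdef] using this t₁ ⟨h.le, le_rfl⟩
    rw [hg0, hp] at h0; exact h0 rfl
/-- Continuous dependence on initial conditions, on a fixed time interval. -/
lemma dep_aux (P : Polynomial ℂ) {γ₀ : ℝ → ℂ}
    (h₀ : ∀ t : ℝ, 0 ≤ t → HasDerivWithinAt γ₀ (P.eval (γ₀ t)) (Set.Ici 0) t)
    {T : ℝ} (hT : 0 ≤ T) {ζ : ℝ} (hζ : 0 < ζ) :
    ∃ ε > 0, ∀ γ : ℝ → ℂ,
      (∀ t : ℝ, 0 ≤ t → HasDerivWithinAt γ (P.eval (γ t)) (Set.Ici 0) t) →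
      dist (γ 0) (γ₀ 0) < ε → dist (γ T) (γ₀ T) < ζ := by
  have hγ₀c : ContinuousOn γ₀ (Icc 0 T) :=
    fun t ht => ((h₀ t ht.1).continuousWithinAt).mono Icc_subset_Ici_self
  obtain ⟨R₀, hR₀⟩ := (isCompact_Icc (a := (0:ℝ)) (b := T)).exists_bound_of_continuousOn hγ₀c
  have hR₀0 : 0 ≤ R₀ := le_trans (norm_nonneg _) (hR₀ 0 (left_mem_Icc.mpr hT))
  obtain ⟨K, hK⟩ := lip_aux P (R := R₀ + 2) (by linarith)
  set ε : ℝ := min ζ 1 / 2 * Real.exp (-(K * T)) with hε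
  have hεpos : 0 < ε := by
    apply mul_pos
    ·
      have : 0 < min ζ 1 := lt_min hζ one_pos
      linarith
    · exact Real.exp_pos _
  refine ⟨ε, hεpos, fun γ hγd hγ0 => ?_⟩
  have hγc : ContinuousOn γ (Icc 0 T) :=
    fun t ht => ((hγd t ht.1).continuousWithinAt).mono Icc_subset_Ici_self
  have hεexp : ∀ t ∈ Icc 0 T, ε * Real.exp (K * t) ≤ min ζ 1 / 2 := by
    intro t ht
    rw [hε, mul_assoc, ← Real.exp_add]
    have h1 : Real.exp (-(K * T) + K * t) ≤ 1 := by
      rw [Real.exp_le_one_iff]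
      have : (K:ℝ) * t ≤ K * T := by
        apply mul_le_mul_of_nonneg_left ht.2 K.coe_nonneg
      linarith
    nlinarith [lt_min hζ (one_pos), Real.exp_pos (-(K * T) + K * t),
      le_min hζ.le (zero_le_one' ℝ)]
  -- the "no-escape" claim
  have key : ∀ b ∈ Icc 0 T, (∀ s ∈ Ico 0 b, dist (γ s) (γ₀ s) < 1) →
      dist (γ b) (γ₀ b) ≤ ε * Real.exp (K * b) := by
    intro b hb hsmall
    have := dist_le_of_trajectories_ODE_of_mem (v := fun _ w => P.eval w)
      (s := fun _ => closedBall (0:ℂ) (R₀ + 2)) (K := K) (fun _ _ => hK)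
      (hγc.mono (Icc_subset_Icc le_rfl hb.2))
      (fun t ht => (hγd t ht.1).mono (Ici_subset_Ici.mpr ht.1))
      (fun t ht => ?_)
      (hγ₀c.mono (Icc_subset_Icc le_rfl hb.2))
      (fun t ht => (h₀ t ht.1).mono (Ici_subset_Ici.mpr ht.1))
      (fun t ht => ?_) hγ0.le b (right_mem_Icc.mpr hb.1)
    · simpa [sub_zero] using this
    · -- γ t ∈ closedBall 0 (R₀ + 2)
      have htI : t ∈ Icc 0 T := ⟨ht.1, ht.2.le.trans hb.2⟩
      have h1 : ‖γ₀ t‖ ≤ R₀ := hR₀ t htI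
      have h2 : dist (γ t) (γ₀ t) < 1 := hsmall t ht
      rw [mem_closedBall_zero_iff]
      calc ‖γ t‖ ≤ ‖γ t - γ₀ t‖ + ‖γ₀ t‖ := by
            simpa using norm_add_le (γ t - γ₀ t) (γ₀ t)
        _ ≤ 1 + R₀ := add_le_add (by rw [← dist_eq_norm]; exact h2.le) h1
        _ ≤ R₀ + 2 := by linarith
    · have htI : t ∈ Icc 0 T := ⟨ht.1, ht.2.le.trans hb.2⟩
      rw [mem_closedBall_zero_iff]
      linarith [hR₀ t htI]
  -- first exit argument
  have hno : ∀ s ∈ Icc 0 T, dist (γ s) (γ₀ s) < 1 := by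
    by_contra hcon
    push_neg at hcon
    obtain ⟨s₀, hs₀I, hs₀⟩ := hcon
    set B : Set ℝ := Icc 0 T ∩ (fun t => dist (γ t) (γ₀ t)) ⁻¹' (Ici 1) with hB
    have hBc : IsClosed B :=
      (continuous_dist.comp_continuousOn (hγc.prodMk hγ₀c)).preimage_isClosed_of_isClosed isClosed_Icc isClosed_Ici
    have hBne : B.Nonempty := ⟨s₀, hs₀I, hs₀⟩
    have hBbdd : BddBelow B := ⟨0, fun t ht => ht.1.1⟩
    set t₁ := sInf B with ht₁
    have ht₁B : t₁ ∈ B := hBc.csInf_mem hBne hBbdd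
    have ht₁low : ∀ s ∈ Ico 0 t₁, dist (γ s) (γ₀ s) < 1 := by
      intro s hs
      by_contra hcon2
      push_neg at hcon2
      have : s ∈ B := ⟨⟨hs.1, hs.2.le.trans ht₁B.1.2⟩, hcon2⟩
      exact absurd (csInf_le hBbdd this) (not_le.mpr hs.2)
    have := key t₁ ht₁B.1 ht₁low
    have hlt1 : dist (γ t₁) (γ₀ t₁) ≤ min ζ 1 / 2 := this.trans (hεexp t₁ ht₁B.1)
    have : (1:ℝ) ≤ min ζ 1 / 2 := le_trans ht₁B.2 hlt1
    have : min ζ 1 ≤ 1 := min_le_right _ _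
    linarith
  -- conclude
  have := key T (right_mem_Icc.mpr hT) (fun s hs => hno s ⟨hs.1, hs.2.le⟩)
  have h2 := this.trans (hεexp T (right_mem_Icc.mpr hT))
  have : min ζ 1 ≤ ζ := min_le_left _ _
  have : min ζ 1 / 2 < ζ := by
    have := lt_min hζ one_pos
    linarith [min_le_left ζ 1]
  linarith


lemma sink_aux (P Q : Polynomial ℂ) (p : ℂ)
    (hfac : ∀ w, P.eval w = (w - p) * Q.eval w)
    {c r : ℝ} (hc : 0 < c) (hr : 0 < r)
    (hQ : ∀ w ∈ closedBall p r, (Q.eval w).re ≤ -c)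
    {γ : ℝ → ℂ} (hderiv : ∀ t : ℝ, 0 ≤ t → HasDerivWithinAt γ (P.eval (γ t)) (Set.Ici 0) t)
    {T : ℝ} (hT : 0 ≤ T) (hmem : dist (γ T) p < r) :
    Tendsto γ atTop (𝓝 p) := by
  set y : ℝ → ℝ := fun t => Complex.normSq (γ t - p) with hy
  have hγc : ContinuousOn γ (Ici 0) := fun t ht => (hderiv t ht).continuousWithinAt
  have hyc : ContinuousOn y (Ici 0) :=
    Complex.continuous_normSq.comp_continuousOn (hγc.sub continuousOn_const)
  have hysq : ∀ t, y t = dist (γ t) p ^ 2 := by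
    intro t
    show Complex.normSq (γ t - p) = _
    rw [Complex.dist_eq, Complex.normSq_eq_norm_sq]
  have hyd : ∀ t, 0 < t → HasDerivAt y (2 * y t * (Q.eval (γ t)).re) t := by
    intro t ht
    have h1 : HasDerivAt γ (P.eval (γ t)) t := (hderiv t ht.le).hasDerivAt (Ici_mem_nhds ht)
    have h2 := hasDerivAt_normSq (p := p) h1
    convert h2 using 1
    rw [hfac (γ t)]
    have h3 : (starRingEnd ℂ) (γ t - p) * ((γ t - p) * Q.eval (γ t))
        = ((Complex.normSq (γ t - p) : ℝ) : ℂ) * Q.eval (γ t) := by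
      rw [← Complex.mul_conj]
      ring
    rw [h3, Complex.re_ofReal_mul]
    simp [hy]; ring
  have key : ∀ ρ, 0 < ρ → ρ ≤ r → ∀ S, T ≤ S → dist (γ S) p < ρ →
      ∀ t, S ≤ t → dist (γ t) p < ρ := by
    intro ρ hρ hρr S hTS hS t hSt
    by_contra hcon
    push_neg at hcon
    set B : Set ℝ := Icc S t ∩ (fun u => dist (γ u) p) ⁻¹' (Ici ρ) with hB
    have hIsub : Icc S t ⊆ Ici 0 := fun u hu => le_trans (hT.trans hTS) hu.1
    have hBc : IsClosed B :=
      ((continuous_dist.comp_continuousOn (((hγc.mono hIsub)).prodMk continuousOn_const))).preimage_isClosed_of_isClosed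
        isClosed_Icc isClosed_Ici
    have hBne : B.Nonempty := ⟨t, ⟨hSt, le_rfl⟩, hcon⟩
    have hBbdd : BddBelow B := ⟨S, fun u hu => hu.1.1⟩
    set t₁ := sInf B with ht₁
    have ht₁B : t₁ ∈ B := hBc.csInf_mem hBne hBbdd
    have hSt₁ : S < t₁ := by
      rcases eq_or_lt_of_le ht₁B.1.1 with h | h
      · exact absurd (h ▸ ht₁B.2) (not_le.mpr hS)
      · exact h
    have hlow : ∀ s ∈ Ico S t₁, dist (γ s) p < ρ := by
      intro s hs
      by_contra hcon2
      push_neg at hcon2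
      have : s ∈ B := ⟨⟨hs.1, hs.2.le.trans ht₁B.1.2⟩, hcon2⟩
      exact absurd (csInf_le hBbdd this) (not_le.mpr hs.2)
    have hmono := mono_aux (φ := fun u => -(y u)) (a := S) (b := t₁) (c := 0) hSt₁.le
      (((hyc.mono (fun u hu => le_trans (hT.trans hTS) hu.1)).neg))
      (by
        intro u hu
        have hu0 : 0 < u := lt_of_le_of_lt (hT.trans hTS) hu.1
        have hur : dist (γ u) p < ρ := hlow u ⟨hu.1.le, hu.2⟩
        have hQu : (Q.eval (γ u)).re ≤ -c := hQ _ (mem_closedBall.mpr (le_of_lt (lt_of_lt_of_le hur hρr)))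
        refine ⟨-(2 * y u * (Q.eval (γ u)).re), ?_, (hyd u hu0).neg⟩
        nlinarith [Complex.normSq_nonneg (γ u - p)])
    have hdt₁ : ρ ≤ dist (γ t₁) p := ht₁B.2
    have h1 : ρ^2 ≤ y t₁ := by
      rw [hysq]
      nlinarith [dist_nonneg (x := γ t₁) (y := p)]
    have h2 : y S < ρ^2 := by
      rw [hysq]
      nlinarith [dist_nonneg (x := γ S) (y := p)]
    simp only [zero_mul, add_zero] at hmono
    linarith
  have inv_r : ∀ t, T ≤ t → dist (γ t) p < r := key r hr le_rfl T le_rfl hmem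
  rw [Metric.tendsto_atTop]
  intro εe hεe
  set ρ := min εe r with hρdef
  have hρ : 0 < ρ := lt_min hεe hr
  have hρr : ρ ≤ r := min_le_right _ _
  have hexS : ∃ S, T ≤ S ∧ dist (γ S) p < ρ := by
    by_contra hcon
    push_neg at hcon
    set b := T + (y T)/(2*c*ρ^2) + 1 with hb
    have hyT0 : 0 ≤ y T := Complex.normSq_nonneg _
    have hbT : T < b := by
      rw [hb]
      have : 0 ≤ (y T)/(2*c*ρ^2) := by positivity
      linarith
    have hmono := mono_aux (φ := fun u => -(y u)) (a := T) (b := b) (c := 2*c*ρ^2) hbT.le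
      ((hyc.mono (fun u hu => le_trans hT hu.1)).neg)
      (by
        intro u hu
        have hu0 : 0 < u := lt_of_le_of_lt hT hu.1
        have hur : dist (γ u) p < r := inv_r u hu.1.le
        have hQu : (Q.eval (γ u)).re ≤ -c := hQ _ (mem_closedBall.mpr hur.le)
        have hyu : ρ^2 ≤ y u := by
          rw [hysq]
          nlinarith [hcon u hu.1.le, dist_nonneg (x := γ u) (y := p)]
        refine ⟨-(2 * y u * (Q.eval (γ u)).re), ?_, (hyd u hu0).neg⟩
        nlinarith)
    have h2 : 2*c*ρ^2*(b - T) = y T + 2*c*ρ^2 := by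
      rw [hb]
      field_simp
      ring
    have hyb0 : 0 ≤ y b := Complex.normSq_nonneg _
    rw [h2] at hmono
    nlinarith [mul_pos hc (pow_pos hρ 2)]
  obtain ⟨S, hTS, hSρ⟩ := hexS
  exact ⟨S, fun t ht => lt_of_lt_of_le (key ρ hρ hρr S hTS hSρ t ht) (min_le_left _ _)⟩


lemma petal_aux (P Q : Polynomial ℂ) (p : ℂ) (k : ℕ) (hk : 2 ≤ k)
    (hfac : ∀ w, P.eval w = (w - p)^k * Q.eval w)
    {μ : ℂ} (hμdef : μ = (1 - (k:ℂ)) * Q.eval p) (hμ0 : μ ≠ 0)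
    {r : ℝ} (hr : 0 < r)
    (hQ : ∀ w ∈ closedBall p r, ‖(1 - (k:ℂ)) * Q.eval w - μ‖ ≤ ‖μ‖ / 2)
    {γ : ℝ → ℂ} (hderiv : ∀ t : ℝ, 0 ≤ t → HasDerivWithinAt γ (P.eval (γ t)) (Set.Ici 0) t)
    (hne : ∀ t, 0 ≤ t → γ t ≠ p)
    {T : ℝ} (hT : 0 ≤ T)
    (hstart : ‖μ‖ / r^(k-1) < ((starRingEnd ℂ) μ * (γ T - p)^(1 - (k:ℤ))).re) :
    Tendsto γ atTop (𝓝 p) := by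
  set Φ : ℝ → ℝ := fun t => ((starRingEnd ℂ) μ * (γ t - p)^(1 - (k:ℤ))).re with hΦdef
  set C : ℝ := ‖μ‖ / r^(k-1) with hC
  set c : ℝ := ‖μ‖^2/2 with hc
  have hμn : 0 < ‖μ‖ := norm_pos_iff.mpr hμ0
  have hcpos : 0 < c := by rw [hc]; positivity
  have hγc : ContinuousOn γ (Ici 0) := fun t ht => (hderiv t ht).continuousWithinAt
  have hcast : (1 : ℤ) - (k:ℤ) = -((k-1 : ℕ) : ℤ) := by
    have : ((k-1 : ℕ) : ℤ) = (k:ℤ) - 1 := by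
      have h1 : 1 ≤ k := le_trans one_le_two hk
      omega
    omega
  have hΦc : ContinuousOn Φ (Ici 0) := by
    apply Complex.continuous_re.comp_continuousOn
    apply ContinuousOn.mul continuousOn_const
    apply ContinuousOn.zpow₀ (hγc.sub continuousOn_const)
    intro t ht
    exact Or.inl (sub_ne_zero.mpr (hne t ht))
  -- (1) size bound
  have small : ∀ t, 0 ≤ t → ∀ δ : ℝ, 0 < δ → ‖μ‖ / δ^(k-1) < Φ t → dist (γ t) p < δ := by
    intro t ht δ hδ hX
    set u := γ t - p with hu
    have hune : u ≠ 0 := sub_ne_zero.mpr (hne t ht)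
    have hub : Φ t * ‖u‖^(k-1) ≤ ‖μ‖ := by
      have h1 : Φ t ≤ ‖(starRingEnd ℂ) μ * u^(1 - (k:ℤ))‖ := by
        rw [hΦdef]
        calc ((starRingEnd ℂ) μ * u^(1 - (k:ℤ))).re
            ≤ |((starRingEnd ℂ) μ * u^(1 - (k:ℤ))).re| := le_abs_self _
          _ ≤ ‖(starRingEnd ℂ) μ * u^(1 - (k:ℤ))‖ := Complex.abs_re_le_norm _
          _ = ‖(starRingEnd ℂ) μ * u^(1 - (k:ℤ))‖ := rfl
      have h2 : ‖(starRingEnd ℂ) μ * u^(1 - (k:ℤ))‖ = ‖μ‖ * (‖u‖^(k-1))⁻¹ := by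
        rw [norm_mul, norm_zpow, hcast, zpow_neg, zpow_natCast, RCLike.norm_conj]
      have h3 : 0 < ‖u‖^(k-1) := pow_pos (norm_pos_iff.mpr hune) _
      rw [h2] at h1
      calc Φ t * ‖u‖^(k-1) ≤ (‖μ‖ * (‖u‖^(k-1))⁻¹) * ‖u‖^(k-1) := by
            apply mul_le_mul_of_nonneg_right h1 h3.le
        _ = ‖μ‖ := by
            rw [mul_assoc, inv_mul_cancel₀ (ne_of_gt h3), mul_one]
    have hun : ‖u‖^(k-1) < δ^(k-1) := by
      by_contra hcon
      push_neg at hcon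
      have hXpos : 0 < ‖μ‖ / δ^(k-1) := by positivity
      have hBb : (‖μ‖/δ^(k-1)) * δ^(k-1) = ‖μ‖ := div_mul_cancel₀ _ (ne_of_gt (pow_pos hδ _))
      have h3u : 0 < ‖u‖^(k-1) := pow_pos (norm_pos_iff.mpr hune) _
      nlinarith [pow_pos hδ (k-1)]
    have : ‖u‖ < δ := lt_of_pow_lt_pow_left₀ (k-1) hδ.le hun
    rwa [dist_eq_norm]
  -- (2) derivative of Φ
  have derivΦ : ∀ t, 0 < t →
      HasDerivAt Φ (((starRingEnd ℂ) μ * ((1 - (k:ℂ)) * Q.eval (γ t))).re) t := by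
    intro t ht
    set u := γ t - p with hu
    have hune : u ≠ 0 := sub_ne_zero.mpr (hne t ht.le)
    have hγd : HasDerivAt γ (P.eval (γ t)) t := (hderiv t ht.le).hasDerivAt (Ici_mem_nhds ht)
    have hz := hasDerivAt_zpow (1 - (k:ℤ)) u (Or.inl hune)
    have husub : HasDerivAt (fun s => γ s - p) (P.eval (γ t)) t := hγd.sub_const p
    have hG := HasDerivAt.comp t hz husub
    have hres := hasDerivAt_re' (hG.const_mul ((starRingEnd ℂ) μ))
    convert hres using 2
    · rfl
    rw [hfac (γ t), ← hu]
    have hpk : u ^ k ≠ 0 := pow_ne_zero _ hune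
    rw [show (1 : ℤ) - (k:ℤ) - 1 = -(k:ℤ) by ring, zpow_neg, zpow_natCast]
    push_cast
    field_simp
  -- (3) derivative lower bound
  have hlb : ∀ ψ : ℂ, ‖ψ - μ‖ ≤ ‖μ‖/2 → c ≤ ((starRingEnd ℂ) μ * ψ).re := by
    intro ψ hψ
    have h1 : (starRingEnd ℂ) μ * ψ = (starRingEnd ℂ) μ * μ + (starRingEnd ℂ) μ * (ψ - μ) := by ring
    have h2 : ((starRingEnd ℂ) μ * μ).re = ‖μ‖^2 := by
      rw [mul_comm, Complex.mul_conj, Complex.normSq_eq_norm_sq,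
        Complex.ofReal_re]
    have h3 : -(‖μ‖ * (‖μ‖/2)) ≤ ((starRingEnd ℂ) μ * (ψ - μ)).re := by
      have ha : |((starRingEnd ℂ) μ * (ψ - μ)).re| ≤ ‖μ‖ * ‖ψ - μ‖ := by
        calc |((starRingEnd ℂ) μ * (ψ - μ)).re| ≤ ‖(starRingEnd ℂ) μ * (ψ - μ)‖ :=
              Complex.abs_re_le_norm _
          _ = ‖(starRingEnd ℂ) μ * (ψ - μ)‖ := rfl
          _ = ‖μ‖ * ‖ψ - μ‖ := by rw [norm_mul, RCLike.norm_conj]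
      have hb : ‖μ‖ * ‖ψ - μ‖ ≤ ‖μ‖ * (‖μ‖/2) := by
        apply mul_le_mul_of_nonneg_left hψ (norm_nonneg _)
      have := neg_abs_le (((starRingEnd ℂ) μ * (ψ - μ)).re)
      linarith
    rw [h1]
    simp only [Complex.add_re]
    rw [h2, hc]
    nlinarith
  -- (4) invariance
  have hinv : ∀ t, T ≤ t → C < Φ t := by
    intro t hTt
    by_contra hcon
    push_neg at hcon
    set B : Set ℝ := Icc T t ∩ Φ ⁻¹' (Iic C) with hB
    have hsub : Icc T t ⊆ Ici 0 := fun s hs => hT.trans hs.1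
    have hBc : IsClosed B :=
      (hΦc.mono hsub).preimage_isClosed_of_isClosed isClosed_Icc isClosed_Iic
    have hBne : B.Nonempty := ⟨t, ⟨hTt, le_rfl⟩, hcon⟩
    have hBbdd : BddBelow B := ⟨T, fun s hs => hs.1.1⟩
    set t₁ := sInf B with ht₁def
    have ht₁B : t₁ ∈ B := hBc.csInf_mem hBne hBbdd
    have hΦt₁ : Φ t₁ ≤ C := ht₁B.2
    have hTt₁ : T < t₁ := by
      rcases eq_or_lt_of_le ht₁B.1.1 with h | h
      · rw [← h] at hΦt₁; exact absurd hΦt₁ (not_le.mpr hstart)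
      · exact h
    have hlow : ∀ s ∈ Ico T t₁, C < Φ s := by
      intro s hs
      by_contra hcon2
      push_neg at hcon2
      have : s ∈ B := ⟨⟨hs.1, hs.2.le.trans ht₁B.1.2⟩, hcon2⟩
      exact absurd (csInf_le hBbdd this) (not_le.mpr hs.2)
    have hmono := mono_aux (φ := Φ) (a := T) (b := t₁) (c := c) hTt₁.le
      (hΦc.mono (fun s hs => hT.trans hs.1))
      (by
        intro s hs
        have hs0 : 0 < s := lt_of_le_of_lt hT hs.1
        have hCs : C < Φ s := hlow s ⟨hs.1.le, hs.2⟩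
        have hds : dist (γ s) p < r := small s hs0.le r hr hCs
        have hψ : ‖(1 - (k:ℂ)) * Q.eval (γ s) - μ‖ ≤ ‖μ‖/2 :=
          hQ _ (mem_closedBall.mpr hds.le)
        exact ⟨_, hlb _ hψ, derivΦ s hs0⟩)
    nlinarith [mul_pos hcpos (sub_pos.mpr hTt₁)]
  -- growth
  have hgrow : ∀ b, T ≤ b → Φ T + c * (b - T) ≤ Φ b := by
    intro b hTb
    rcases eq_or_lt_of_le hTb with h | h
    · rw [← h]; simp
    · apply mono_aux h.le (hΦc.mono (fun s hs => hT.trans hs.1))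
      intro s hs
      have hs0 : 0 < s := lt_of_le_of_lt hT hs.1
      have hCs : C < Φ s := hinv s hs.1.le
      have hds : dist (γ s) p < r := small s hs0.le r hr hCs
      have hψ : ‖(1 - (k:ℂ)) * Q.eval (γ s) - μ‖ ≤ ‖μ‖/2 :=
        hQ _ (mem_closedBall.mpr hds.le)
      exact ⟨_, hlb _ hψ, derivΦ s hs0⟩
  -- conclusion
  rw [Metric.tendsto_atTop]
  intro εe hεe
  set δ : ℝ := min εe r with hδdef
  have hδ : 0 < δ := lt_min hεe hr
  set X : ℝ := ‖μ‖ / δ^(k-1) with hX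
  set N : ℝ := max T (T + (X + 1 - Φ T)/c) with hN
  refine ⟨N, fun t htN => ?_⟩
  have hTt : T ≤ t := le_trans (le_max_left _ _) htN
  have hNT : (X + 1 - Φ T)/c ≤ t - T := by
    have := le_trans (le_max_right _ _) htN
    linarith
  have h5 : X + 1 - Φ T ≤ c * (t - T) := by
    rw [div_le_iff₀ hcpos] at hNT
    linarith [hNT]
  have h6 : X + 1 ≤ Φ t := by
    have := hgrow t hTt
    linarith
  have h7 : dist (γ t) p < δ := small t (hT.trans hTt) δ hδ (by linarith)
  exact lt_of_lt_of_le h7 (min_le_left _ _)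


lemma res_aux (P Q : Polynomial ℂ) (p : ℂ) (hfac : ∀ w, P.eval w = (w - p) * Q.eval w)
    (hQp : Q.eval p ≠ 0) (Res : ℂ → ℂ)
    (h : ∃ ρ₀ > 0, ∀ ρ : ℝ, 0 < ρ → ρ < ρ₀ →
      (∮ w in C(p, ρ), (P.eval w)⁻¹) = 2 * (Real.pi : ℂ) * Complex.I * Res p) :
    Res p = (Q.eval p)⁻¹ := by
  obtain ⟨ρ₀, hρ₀, hI⟩ := h
  obtain ⟨rq, hrq, hball⟩ : ∃ rq > 0, ∀ w ∈ closedBall p rq, Q.eval w ≠ 0 := by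
    have hopen : IsOpen {w : ℂ | Q.eval w ≠ 0} :=
      isOpen_compl_singleton.preimage (Polynomial.continuous Q)
    have hmem : {w : ℂ | Q.eval w ≠ 0} ∈ 𝓝 p := hopen.mem_nhds hQp
    obtain ⟨rq, hrq, hsub⟩ := Metric.nhds_basis_closedBall.mem_iff.mp hmem
    exact ⟨rq, hrq, fun w hw => hsub hw⟩
  set ρ := min (ρ₀/2) rq with hρdef
  have hρpos : 0 < ρ := lt_min (by linarith) hrq
  have hρlt : ρ < ρ₀ := lt_of_le_of_lt (min_le_left _ _) (by linarith)
  have hρrq : ρ ≤ rq := min_le_right _ _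
  have hsub : closedBall p ρ ⊆ closedBall p rq := closedBall_subset_closedBall hρrq
  set f : ℂ → ℂ := fun w => (Q.eval w)⁻¹ with hf
  have hd : DiffContOnCl ℂ f (ball p ρ) := by
    constructor
    · intro w hw
      exact ((Q.differentiable.differentiableAt).inv
        (hball w (hsub (ball_subset_closedBall hw)))).differentiableWithinAt
    · apply ContinuousOn.inv₀
      · exact (Polynomial.continuous Q).continuousOn
      · intro w hw
        exact hball w (hsub (closure_ball_subset_closedBall hw))
  have hkey := hd.circleIntegral_sub_inv_smul (mem_ball_self hρpos)
  have heq : (∮ z in C(p, ρ), (z - p)⁻¹ • f z) = ∮ z in C(p, ρ), (P.eval z)⁻¹ := by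
    apply circleIntegral.integral_congr hρpos.le
    intro z _
    simp only [smul_eq_mul, hf]
    rw [hfac z, mul_inv]
  rw [heq, hI ρ hρpos hρlt] at hkey
  have h2πI : (2 * (Real.pi:ℂ) * Complex.I) ≠ 0 := by
    simp [Real.pi_ne_zero, Complex.I_ne_zero, Complex.ofReal_ne_zero]
  have hfin : 2 * (Real.pi:ℂ) * Complex.I * Res p = 2 * (Real.pi:ℂ) * Complex.I * f p := by
    rw [hkey, smul_eq_mul]
  exact mul_left_cancel₀ h2πI hfin

lemma petal_enter (P Q : Polynomial ℂ) (p : ℂ) (k : ℕ) (hk : 2 ≤ k)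
    (hfac : ∀ w, P.eval w = (w - p)^k * Q.eval w)
    {μ : ℂ} (hμ0 : μ ≠ 0) {r : ℝ} (hr : 0 < r)
    (hQ : ∀ w ∈ closedBall p r, ‖(1 - (k:ℂ)) * Q.eval w - μ‖ ≤ ‖μ‖ / 2)
    {γ : ℝ → ℂ} (hderiv : ∀ t : ℝ, 0 ≤ t → HasDerivWithinAt γ (P.eval (γ t)) (Set.Ici 0) t)
    (hne : ∀ t, 0 ≤ t → γ t ≠ p) (hlim : Tendsto γ atTop (𝓝 p)) :
    ∃ T, 0 ≤ T ∧ ‖μ‖ / r^(k-1) < ((starRingEnd ℂ) μ * (γ T - p)^(1 - (k:ℤ))).re := by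
  set Φ : ℝ → ℝ := fun t => ((starRingEnd ℂ) μ * (γ t - p)^(1 - (k:ℤ))).re with hΦdef
  set C : ℝ := ‖μ‖ / r^(k-1) with hC
  set c : ℝ := ‖μ‖^2/2 with hc
  have hμn : 0 < ‖μ‖ := norm_pos_iff.mpr hμ0
  have hcpos : 0 < c := by rw [hc]; positivity
  have hγc : ContinuousOn γ (Ici 0) := fun t ht => (hderiv t ht).continuousWithinAt
  have hΦc : ContinuousOn Φ (Ici 0) := by
    apply Complex.continuous_re.comp_continuousOn
    apply ContinuousOn.mul continuousOn_const
    apply ContinuousOn.zpow₀ (hγc.sub continuousOn_const)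
    intro t ht
    exact Or.inl (sub_ne_zero.mpr (hne t ht))
  have derivΦ : ∀ t, 0 < t →
      HasDerivAt Φ (((starRingEnd ℂ) μ * ((1 - (k:ℂ)) * Q.eval (γ t))).re) t := by
    intro t ht
    set u := γ t - p with hu
    have hune : u ≠ 0 := sub_ne_zero.mpr (hne t ht.le)
    have hγd : HasDerivAt γ (P.eval (γ t)) t := (hderiv t ht.le).hasDerivAt (Ici_mem_nhds ht)
    have hz := hasDerivAt_zpow (1 - (k:ℤ)) u (Or.inl hune)
    have husub : HasDerivAt (fun s => γ s - p) (P.eval (γ t)) t := hγd.sub_const p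
    have hG := HasDerivAt.comp t hz husub
    have hres := hasDerivAt_re' (hG.const_mul ((starRingEnd ℂ) μ))
    convert hres using 2
    · rfl
    rw [hfac (γ t), ← hu]
    have hpk : u ^ k ≠ 0 := pow_ne_zero _ hune
    rw [show (1 : ℤ) - (k:ℤ) - 1 = -(k:ℤ) by ring, zpow_neg, zpow_natCast]
    push_cast
    field_simp
  have hlb : ∀ ψ : ℂ, ‖ψ - μ‖ ≤ ‖μ‖/2 → c ≤ ((starRingEnd ℂ) μ * ψ).re := by
    intro ψ hψ
    have h1 : (starRingEnd ℂ) μ * ψ = (starRingEnd ℂ) μ * μ + (starRingEnd ℂ) μ * (ψ - μ) := by ring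
    have h2 : ((starRingEnd ℂ) μ * μ).re = ‖μ‖^2 := by
      rw [mul_comm, Complex.mul_conj, Complex.normSq_eq_norm_sq,
        Complex.ofReal_re]
    have h3 : -(‖μ‖ * (‖μ‖/2)) ≤ ((starRingEnd ℂ) μ * (ψ - μ)).re := by
      have ha : |((starRingEnd ℂ) μ * (ψ - μ)).re| ≤ ‖μ‖ * ‖ψ - μ‖ := by
        calc |((starRingEnd ℂ) μ * (ψ - μ)).re| ≤ ‖(starRingEnd ℂ) μ * (ψ - μ)‖ :=
              Complex.abs_re_le_norm _
          _ = ‖(starRingEnd ℂ) μ * (ψ - μ)‖ := rfl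
          _ = ‖μ‖ * ‖ψ - μ‖ := by rw [norm_mul, RCLike.norm_conj]
      have hb : ‖μ‖ * ‖ψ - μ‖ ≤ ‖μ‖ * (‖μ‖/2) :=
        mul_le_mul_of_nonneg_left hψ (norm_nonneg _)
      have := neg_abs_le (((starRingEnd ℂ) μ * (ψ - μ)).re)
      linarith
    rw [h1]
    simp only [Complex.add_re]
    rw [h2, hc]
    nlinarith
  obtain ⟨N, hN⟩ := Metric.tendsto_atTop.mp hlim r hr
  set T₀ := max N 0 with hT₀def
  have hT₀ : 0 ≤ T₀ := le_max_right _ _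
  have hdist : ∀ t, T₀ ≤ t → dist (γ t) p < r :=
    fun t ht => hN t (le_trans (le_max_left _ _) ht)
  set b := max T₀ (T₀ + (C + 1 - Φ T₀)/c) with hbdef
  have hbT₀ : T₀ ≤ b := le_max_left _ _
  have hmono := mono_aux (φ := Φ) (a := T₀) (b := b) (c := c) hbT₀
    (hΦc.mono (fun s hs => hT₀.trans hs.1))
    (by
      intro s hs
      have hs0 : 0 < s := lt_of_le_of_lt hT₀ hs.1
      have hψ : ‖(1 - (k:ℂ)) * Q.eval (γ s) - μ‖ ≤ ‖μ‖/2 :=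
        hQ _ (mem_closedBall.mpr (hdist s hs.1.le).le)
      exact ⟨_, hlb _ hψ, derivΦ s hs0⟩)
  refine ⟨b, le_trans hT₀ hbT₀, ?_⟩
  have hNT : (C + 1 - Φ T₀)/c ≤ b - T₀ := by
    have := le_max_right T₀ (T₀ + (C + 1 - Φ T₀)/c)
    linarith [this.trans (le_refl b)]
  have h5 : C + 1 - Φ T₀ ≤ c * (b - T₀) := by
    rw [div_le_iff₀ hcpos] at hNT
    linarith
  have : C + 1 ≤ Φ b := by linarith
  have hfin : C < Φ b := by linarith
  exact hfin


end Stmt9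

open Stmt9 in
/-- local constancy of the forward-limit map for the real flow of a
polynomial vector field in `𝒳_∞`. -/
theorem stmt_9
    (P : Polynomial ℂ) (hdeg : 2 ≤ P.natDegree)
    (Res : ℂ → ℂ)
    (hRes : ∀ p : ℂ, P.eval p = 0 → ∃ ρ₀ > 0, ∀ ρ : ℝ, 0 < ρ → ρ < ρ₀ →
      (∮ w in C(p, ρ), (P.eval w)⁻¹) = 2 * (Real.pi : ℂ) * Complex.I * Res p)
    (hsum : ∀ S : Finset ℂ, (∀ p ∈ S, P.eval p = 0) →
      ∀ t : ℝ, t ≠ 0 → (2 * (Real.pi : ℂ) * Complex.I) * ∑ p ∈ S, Res p ≠ (t : ℂ))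
    (w₀ : ℂ) (hw₀ : P.eval w₀ ≠ 0)
    (γ₀ : ℝ → ℂ) (hγ₀0 : γ₀ 0 = w₀)
    (hγ₀deriv : ∀ t : ℝ, 0 ≤ t → HasDerivWithinAt γ₀ (P.eval (γ₀ t)) (Set.Ici 0) t)
    (hγ₀bdd : ∃ M : ℝ, ∀ t : ℝ, 0 ≤ t → ‖γ₀ t‖ ≤ M)
    (p : ℂ) (hp : P.eval p = 0) (hγ₀lim : Tendsto γ₀ atTop (𝓝 p)) :
    ∃ ε > 0, ∀ w ∈ ball w₀ ε, ∀ γ : ℝ → ℂ, γ 0 = w →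
      (∀ t : ℝ, 0 ≤ t → HasDerivWithinAt γ (P.eval (γ t)) (Set.Ici 0) t) →
      (∃ M : ℝ, ∀ t : ℝ, 0 ≤ t → ‖γ t‖ ≤ M) →
      Tendsto γ atTop (𝓝 p) := by
  classical
  have hP0 : P ≠ 0 := by
    intro h
    rw [h] at hdeg
    simp at hdeg
  set k := P.rootMultiplicity p with hkdef
  obtain ⟨Q, hPQ, hndvd⟩ := P.exists_eq_pow_rootMultiplicity_mul_and_not_dvd hP0 p
  have hQp : Q.eval p ≠ 0 := fun h => hndvd (Polynomial.dvd_iff_isRoot.mpr h)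
  have hfac : ∀ w, P.eval w = (w - p)^k * Q.eval w := by
    intro w
    conv_lhs => rw [hPQ]
    simp [Polynomial.eval_mul, Polynomial.eval_pow, hkdef]
  have hk1 : 1 ≤ k := (Polynomial.rootMultiplicity_pos hP0).mpr hp
  have hγ₀ne : ∀ t, 0 ≤ t → γ₀ t ≠ p :=
    never_root P hγ₀deriv (by rw [hγ₀0]; exact hw₀) hp
  obtain ⟨ε₁, hε₁, hPne⟩ : ∃ ε₁ > 0, ∀ w ∈ ball w₀ ε₁, P.eval w ≠ 0 := by
    have hopen : IsOpen {w : ℂ | P.eval w ≠ 0} :=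
      isOpen_compl_singleton.preimage (Polynomial.continuous P)
    obtain ⟨ε₁, hε₁, hsub⟩ := Metric.isOpen_iff.mp hopen w₀ hw₀
    exact ⟨ε₁, hε₁, fun w hw => hsub hw⟩
  rcases eq_or_lt_of_le hk1 with hk1' | hk2
  · -- simple zero
    have hfac1 : ∀ w, P.eval w = (w - p) * Q.eval w := by
      intro w
      rw [hfac w, ← hk1', pow_one]
    set l := Q.eval p with hldef
    rcases lt_trichotomy l.re 0 with hneg | hzero | hpos
    · -- sink case
      obtain ⟨r, hr, hQr⟩ := cont_ball Q p (η := -l.re/2) (by linarith)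
      have hQhi : ∀ w ∈ closedBall p r, (Q.eval w).re ≤ -(-l.re/2) := by
        intro w hw
        have h1 := hQr w hw
        have h2 : |(Q.eval w - Q.eval p).re| ≤ ‖Q.eval w - Q.eval p‖ := by
          exact Complex.abs_re_le_norm _
        have h3 := abs_le.mp (h2.trans h1)
        simp only [Complex.sub_re] at h3
        linarith [h3.2]
      obtain ⟨N, hN⟩ := Metric.tendsto_atTop.mp hγ₀lim (r/2) (by linarith)
      set T := max N 0 with hTdef
      have hT0 : (0:ℝ) ≤ T := le_max_right _ _
      have hd0 : dist (γ₀ T) p < r/2 := hN T (le_max_left _ _)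
      obtain ⟨ε₂, hε₂, hdep⟩ := dep_aux P hγ₀deriv hT0 (ζ := r/2) (by linarith)
      refine ⟨min ε₁ ε₂, lt_min hε₁ hε₂, ?_⟩
      intro w hw γ hγ0 hγd _
      have hdist0 : dist (γ 0) (γ₀ 0) < ε₂ := by
        rw [hγ0, hγ₀0]
        exact lt_of_lt_of_le (mem_ball.mp hw) (min_le_right _ _)
      have hdT := hdep γ hγd hdist0
      have hmem : dist (γ T) p < r := by
        calc dist (γ T) p ≤ dist (γ T) (γ₀ T) + dist (γ₀ T) p := dist_triangle _ _ _
          _ < r/2 + r/2 := add_lt_add hdT hd0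
          _ = r := by ring
      exact sink_aux P Q p hfac1 (c := -l.re/2) (by linarith) hr hQhi hγd hT0 hmem
    · -- center case : contradiction with hsum
      exfalso
      have hres := res_aux P Q p hfac1 hQp Res (hRes p hp)
      have him : l.im ≠ 0 := by
        intro h
        apply hQp
        show l = 0
        apply Complex.ext <;> simp [hzero, h]
      have ht_ne : (2 * Real.pi / l.im : ℝ) ≠ 0 := by
        apply div_ne_zero _ him
        positivity
      apply hsum {p} (by
        intro q hq
        rw [Finset.mem_singleton] at hq
        rw [hq]; exact hp) (2 * Real.pi / l.im) ht_ne
      rw [Finset.sum_singleton, hres, ← hldef]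
      have hlI : l = (l.im : ℂ) * Complex.I := by
        apply Complex.ext <;> simp [hzero]
      have himC : (l.im : ℂ) ≠ 0 := Complex.ofReal_ne_zero.mpr him
      rw [hlI, mul_inv, Complex.inv_I]
      push_cast
      field_simp
      ring_nf
      simp [Complex.I_sq]
      exact (mul_inv_cancel₀ himC).symm
    · -- source case : contradiction with convergence
      exfalso
      obtain ⟨r, hr, hQr⟩ := cont_ball Q p (η := l.re/2) (by linarith)
      have hQlow : ∀ w ∈ closedBall p r, l.re/2 ≤ (Q.eval w).re := by
        intro w hw
        have h1 := hQr w hw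
        have h2 : |(Q.eval w - Q.eval p).re| ≤ ‖Q.eval w - Q.eval p‖ := by
          exact Complex.abs_re_le_norm _
        have h3 := abs_le.mp (h2.trans h1)
        simp only [Complex.sub_re] at h3
        linarith [h3.1]
      obtain ⟨N, hN⟩ := Metric.tendsto_atTop.mp hγ₀lim r hr
      set T := max N 0 with hTdef
      have hT0 : (0:ℝ) ≤ T := le_max_right _ _
      have hdist : ∀ t, T ≤ t → dist (γ₀ t) p < r :=
        fun t ht => hN t (le_trans (le_max_left _ _) ht)
      set y : ℝ → ℝ := fun t => Complex.normSq (γ₀ t - p) with hydef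
      have hγc : ContinuousOn γ₀ (Ici 0) := fun t ht => (hγ₀deriv t ht).continuousWithinAt
      have hyc : ContinuousOn y (Ici 0) :=
        Complex.continuous_normSq.comp_continuousOn (hγc.sub continuousOn_const)
      have hyd : ∀ t, 0 < t → HasDerivAt y (2 * y t * (Q.eval (γ₀ t)).re) t := by
        intro t ht
        have h1 : HasDerivAt γ₀ (P.eval (γ₀ t)) t :=
          (hγ₀deriv t ht.le).hasDerivAt (Ici_mem_nhds ht)
        have h2 := hasDerivAt_normSq (p := p) h1
        convert h2 using 1
        rw [hfac1 (γ₀ t)]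
        have h3 : (starRingEnd ℂ) (γ₀ t - p) * ((γ₀ t - p) * Q.eval (γ₀ t))
            = ((Complex.normSq (γ₀ t - p) : ℝ) : ℂ) * Q.eval (γ₀ t) := by
          rw [← Complex.mul_conj]
          ring
        rw [h3, Complex.re_ofReal_mul]
        simp [hydef]; ring
      have hgrow : ∀ b, T ≤ b → y T ≤ y b := by
        intro b hTb
        rcases eq_or_lt_of_le hTb with h | h
        · rw [h]
        · have hmono := mono_aux (φ := y) (a := T) (b := b) (c := 0) h.le
            (hyc.mono (fun s hs => hT0.trans hs.1))
            (by
              intro s hs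
              have hs0 : 0 < s := lt_of_le_of_lt hT0 hs.1
              have hds : dist (γ₀ s) p < r := hdist s hs.1.le
              have hQs := hQlow _ (mem_closedBall.mpr hds.le)
              refine ⟨2 * y s * (Q.eval (γ₀ s)).re, ?_, hyd s hs0⟩
              nlinarith [Complex.normSq_nonneg (γ₀ s - p)])
          simp only [zero_mul, add_zero] at hmono
          linarith
      have hy0 : Tendsto y atTop (𝓝 0) := by
        have h1 : Tendsto (fun t => γ₀ t - p) atTop (𝓝 0) := by
          simpa using hγ₀lim.sub_const p
        have h2 := (Complex.continuous_normSq.tendsto 0).comp h1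
        simpa [Function.comp_def] using h2
      have hyT : 0 < y T := Complex.normSq_pos.mpr (sub_ne_zero.mpr (hγ₀ne T hT0))
      have : y T ≤ 0 := ge_of_tendsto hy0 (eventually_atTop.mpr ⟨T, fun b hb => hgrow b hb⟩)
      linarith
  · -- multiple zero : petal case
    have hk2' : 2 ≤ k := hk2
    set μ : ℂ := (1 - (k:ℂ)) * Q.eval p with hμdef
    have h1k : (1 - (k:ℂ)) ≠ 0 := by
      intro h
      have : (k:ℂ) = 1 := by linear_combination -h
      have : (k:ℕ) = 1 := by exact_mod_cast this
      omega
    have hμ0 : μ ≠ 0 := mul_ne_zero h1k hQp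
    have hμn : 0 < ‖μ‖ := norm_pos_iff.mpr hμ0
    set R : Polynomial ℂ := Polynomial.C (1 - (k:ℂ)) * Q with hRdef
    have hRev : ∀ w, R.eval w = (1 - (k:ℂ)) * Q.eval w := by
      intro w; simp [hRdef]
    obtain ⟨r, hr, hQr⟩ := cont_ball R p (η := ‖μ‖/2) (by positivity)
    have hQr' : ∀ w ∈ closedBall p r, ‖(1 - (k:ℂ)) * Q.eval w - μ‖ ≤ ‖μ‖/2 := by
      intro w hw
      have := hQr w hw
      rwa [hRev, hRev, ← hμdef] at this
    obtain ⟨T, hT0, hstart⟩ := petal_enter P Q p k hk2' hfac hμ0 hr hQr' hγ₀deriv hγ₀ne hγ₀lim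
    set V : Set ℂ :=
      {z | z ≠ p ∧ ‖μ‖/r^(k-1) < ((starRingEnd ℂ) μ * (z - p)^(1 - (k:ℤ))).re} with hVdef
    have hVopen : IsOpen V := by
      rw [isOpen_iff_mem_nhds]
      rintro z ⟨hz, hzC⟩
      have hcont : ContinuousAt (fun z : ℂ => ((starRingEnd ℂ) μ * (z - p)^(1 - (k:ℤ))).re) z := by
        apply Complex.continuous_re.continuousAt.comp
        apply ContinuousAt.mul continuousAt_const
        exact ContinuousAt.zpow₀ ((continuous_id.sub continuous_const).continuousAt) _
          (Or.inl (sub_ne_zero.mpr hz))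
      have h1 : {y : ℂ | y ≠ p} ∈ 𝓝 z := isOpen_ne.mem_nhds hz
      have h2 : (fun z : ℂ => ((starRingEnd ℂ) μ * (z - p)^(1 - (k:ℤ))).re) ⁻¹'
          (Ioi (‖μ‖/r^(k-1))) ∈ 𝓝 z := hcont.preimage_mem_nhds (Ioi_mem_nhds hzC)
      filter_upwards [h1, h2] with x hx1 hx2
      exact ⟨hx1, hx2⟩
    have hγ₀TV : γ₀ T ∈ V := ⟨hγ₀ne T hT0, hstart⟩
    obtain ⟨ζ, hζ, hballV⟩ := Metric.isOpen_iff.mp hVopen (γ₀ T) hγ₀TV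
    obtain ⟨ε₂, hε₂, hdep⟩ := dep_aux P hγ₀deriv hT0 hζ
    refine ⟨min ε₁ ε₂, lt_min hε₁ hε₂, ?_⟩
    intro w hw γ hγ0 hγd _
    have hPw : P.eval (γ 0) ≠ 0 := by
      rw [hγ0]
      exact hPne w (mem_ball.mpr (lt_of_lt_of_le (mem_ball.mp hw) (min_le_left _ _)))
    have hγne : ∀ t, 0 ≤ t → γ t ≠ p := never_root P hγd hPw hp
    have hdist0 : dist (γ 0) (γ₀ 0) < ε₂ := by
      rw [hγ0, hγ₀0]
      exact lt_of_lt_of_le (mem_ball.mp hw) (min_le_right _ _)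
    have hγT : γ T ∈ V := hballV (mem_ball.mpr (hdep γ hγd hdist0))
    exact petal_aux P Q p k hk2' hfac hμdef hμ0 hr hQr' hγd hγne hT0 hγT.2
end

section
/- Let g be holomorphic on a neighborhood of 0 ∈ ℂ with g(y) = a·y^{ν+1} + O(y^{ν+2}), a ≠ 0 and ν ≥ 1. Let κ be holomorphic on a neighborhood of 0 with κ(0) = 0 and κ'(0) = 1. Suppose that the function y ↦ κ'(y)/g(κ(y)) − 1/g(y), defined for small y ≠ 0, extends holomorphically across 0 (this is the derivative of ψ∘κ − ψ for ψ an integral of the time form of g(y)∂/∂y, so the hypothesis says ψ∘κ − ψ is holomorphic at 0). Then (κ(y) − y)/g(y) extends holomorphically across 0; in particular κ^{(j)}(0) = 0 for all 2 ≤ j ≤ ν, and κ^{(ν+1)}(0) = d·g^{(ν+1)}(0) where d is the value at 0 of the extension of (κ − id)/g. -/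
open Metric Set Filter Topology Function FormalMultilinearSeries

namespace Stmt14

lemma iteratedDeriv_eq_coeff {f : ℂ → ℂ} {p : FormalMultilinearSeries ℂ ℂ ℂ}
    (hp : HasFPowerSeriesAt f p 0) (n : ℕ) :
    iteratedDeriv n f 0 = (n.factorial : ℂ) * p.coeff n := by
  obtain ⟨r, hr⟩ := hp
  rw [iteratedDeriv_eq_iteratedFDeriv]
  have h := hr.factorial_smul (1 : ℂ) n
  rw [← h, FormalMultilinearSeries.coeff, nsmul_eq_mul]
  norm_num

lemma ev_eq_of_punctured {f g : ℂ → ℂ} (hf : AnalyticAt ℂ f 0) (hg : AnalyticAt ℂ g 0)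
    (h : ∀ᶠ z in 𝓝[≠] (0:ℂ), f z = g z) : ∀ᶠ z in 𝓝 (0:ℂ), f z = g z :=
  (hf.frequently_eq_iff_eventually_eq hg).mp h.frequently

lemma analyticAt_deriv {f : ℂ → ℂ} (hf : AnalyticAt ℂ f 0) : AnalyticAt ℂ (deriv f) 0 := by
  obtain ⟨s, hs, h⟩ := hf.exists_mem_nhds_analyticOnNhd
  exact h.deriv 0 (mem_of_mem_nhds hs)

lemma coeffs_fac {f : ℂ → ℂ} (hf : AnalyticAt ℂ f 0) (n : ℕ)
    (h : ∀ k < n, iteratedDeriv k f 0 = 0) :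
    ∃ u : ℂ → ℂ, AnalyticAt ℂ u 0 ∧ ∀ᶠ z in 𝓝 (0:ℂ), f z = z ^ n * u z := by
  obtain ⟨p, hp⟩ := hf
  have hc : ∀ k < n, p.coeff k = 0 := by
    intro k hk
    have h2 := (iteratedDeriv_eq_coeff hp k).symm
    rw [h k hk] at h2
    have : (k.factorial : ℂ) ≠ 0 := Nat.cast_ne_zero.2 (Nat.factorial_ne_zero k)
    exact (mul_eq_zero.1 h2).resolve_left this
  refine ⟨(swap dslope 0)^[n] f, ⟨_, hp.has_fpower_series_iterate_dslope_fslope n⟩, ?_⟩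
  have hq := hasFPowerSeriesAt_iff'.mp (hp.has_fpower_series_iterate_dslope_fslope n)
  filter_upwards [hq, hasFPowerSeriesAt_iff'.mp hp] with x hx1 hx2
  simp only [sub_zero] at hx1 hx2
  obtain ⟨s, hs1, hs2⟩ := HasSum.exists_hasSum_smul_of_apply_eq_zero hx2 hc
  simp only [coeff_iterate_fslope] at hx1
  have : s = (swap dslope 0)^[n] f x := hs2.unique hx1
  rw [this] at hs1
  rw [← hs1, smul_eq_mul]

lemma fac_coeffs : ∀ (n : ℕ) {f u : ℂ → ℂ}, AnalyticAt ℂ f 0 → AnalyticAt ℂ u 0 →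
    (∀ᶠ z in 𝓝 (0:ℂ), f z = z ^ n * u z) →
    (∀ k < n, iteratedDeriv k f 0 = 0) ∧ iteratedDeriv n f 0 = (n.factorial : ℂ) * u 0 := by
  intro n
  induction n with
  | zero =>
    intro f u hf hu hev
    refine ⟨fun k hk => absurd hk (Nat.not_lt_zero k), ?_⟩
    have h0 : f 0 = u 0 := by simpa using hev.self_of_nhds
    simpa using h0
  | succ n ih =>
    intro f u hf hu hev
    have hf0 : f 0 = 0 := by simpa using hev.self_of_nhds
    obtain ⟨p, hp⟩ := hf
    have hd_series := hp.has_fpower_series_dslope_fslope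
    have hd_an : AnalyticAt ℂ (dslope f 0) 0 := ⟨_, hd_series⟩
    have hpow : AnalyticAt ℂ (fun z => z ^ n * u z) 0 := (analyticAt_id.pow n).mul hu
    have hev' : ∀ᶠ z in 𝓝 (0:ℂ), dslope f 0 z = z ^ n * u z := by
      apply ev_eq_of_punctured hd_an hpow
      have h1 : ∀ᶠ z in 𝓝[≠] (0:ℂ), f z = z ^ (n+1) * u z := hev.filter_mono nhdsWithin_le_nhds
      filter_upwards [h1, self_mem_nhdsWithin] with z hz hz0
      have hz0' : z ≠ 0 := hz0
      rw [dslope_of_ne _ hz0, slope_def_field, hf0, hz]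
      field_simp [hz0']
      ring
    obtain ⟨h1, h2⟩ := ih hd_an hu hev'
    have key : ∀ k : ℕ, iteratedDeriv k (dslope f 0) 0 = (k.factorial : ℂ) * p.coeff (k+1) := by
      intro k
      rw [iteratedDeriv_eq_coeff hd_series k, FormalMultilinearSeries.coeff_fslope]
    constructor
    · intro k hk
      rcases Nat.eq_zero_or_pos k with rfl | hkpos
      · simpa using hf0
      · obtain ⟨k', rfl⟩ := Nat.exists_eq_succ_of_ne_zero hkpos.ne'
        rw [iteratedDeriv_eq_coeff hp]
        have h3 := h1 k' (by omega)
        rw [key k'] at h3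
        have hk0 : p.coeff (k'+1) = 0 :=
          (mul_eq_zero.1 h3).resolve_left (Nat.cast_ne_zero.2 (Nat.factorial_ne_zero k'))
        rw [hk0, mul_zero]
    · rw [iteratedDeriv_eq_coeff hp]
      rw [key n] at h2
      have hc : p.coeff (n+1) = u 0 :=
        mul_left_cancel₀ (Nat.cast_ne_zero.2 (Nat.factorial_ne_zero n)) h2
      rw [hc]

lemma ev_zero_of_coeffs {f : ℂ → ℂ} (hf : AnalyticAt ℂ f 0)
    (h : ∀ k, iteratedDeriv k f 0 = 0) : ∀ᶠ z in 𝓝 (0:ℂ), f z = 0 := by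
  obtain ⟨p, hp⟩ := hf
  have hp0 : p = 0 := by
    ext n : 1
    rw [← FormalMultilinearSeries.mkPiRing_coeff_eq p]
    have h2 := (iteratedDeriv_eq_coeff hp n).symm
    rw [h n] at h2
    have : p.coeff n = 0 :=
      (mul_eq_zero.1 h2).resolve_left (Nat.cast_ne_zero.2 (Nat.factorial_ne_zero n))
    simp [this, ContinuousMultilinearMap.mkPiRing_zero]
  exact hp.locally_zero_iff.mpr hp0

lemma alg (z B u s V uκ D K G Gκ W : ℂ) (m' ν : ℕ)
    (e1 : K = z^(m'+1) * B + 1)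
    (e2 : G = z^(ν+1) * u)
    (e3 : Gκ = (z*W)^(ν+1) * uκ)
    (e5 : W^(ν+1) = V * (W - 1) + 1)
    (e6 : W - 1 = z^(m'+1) * s)
    (e7 : uκ = u + z^(m'+2) * s * D) :
    K * G - Gκ = z^(m'+ν+2) * (B * u - (s * V * uκ + z * (s * D))) := by
  subst e1 e2 e3 e7
  rw [mul_pow, e5, e6]
  ring

lemma jets {κ : ℂ → ℂ} (hκ : AnalyticAt ℂ κ 0) (j : ℕ) (hj : 2 ≤ j) :
    iteratedDeriv j (fun z => κ z - z) 0 = iteratedDeriv j κ 0 := by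
  obtain ⟨p, hp⟩ := hκ
  have hid := (ContinuousLinearMap.id ℂ ℂ).hasFPowerSeriesAt (0 : ℂ)
  have hsub : HasFPowerSeriesAt (fun z => κ z - z)
      (p - (ContinuousLinearMap.id ℂ ℂ).fpowerSeries 0) 0 := hp.sub hid
  rw [iteratedDeriv_eq_coeff hsub j, iteratedDeriv_eq_coeff hp j]
  obtain ⟨j', rfl⟩ : ∃ j', j = j' + 2 := ⟨j - 2, by omega⟩
  have hz : ((ContinuousLinearMap.id ℂ ℂ).fpowerSeries 0) (j' + 2) = 0 :=
    ContinuousLinearMap.fpowerSeries_apply_add_two _ 0 j'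
  have h4 : (p - (ContinuousLinearMap.id ℂ ℂ).fpowerSeries 0).coeff (j' + 2) = p.coeff (j' + 2) := by
    show (p (j' + 2) - ((ContinuousLinearMap.id ℂ ℂ).fpowerSeries 0) (j' + 2)) 1 = p (j' + 2) 1
    rw [hz, sub_zero]
  rw [h4]

lemma sub_comp_fac {u κ : ℂ → ℂ} (hu : AnalyticAt ℂ u 0) (hκ : AnalyticAt ℂ κ 0) (hκ0 : κ 0 = 0)
    (hne : ∀ᶠ z in 𝓝[≠] (0:ℂ), κ z - z ≠ 0) :
    ∃ D : ℂ → ℂ, AnalyticAt ℂ D 0 ∧ ∀ᶠ z in 𝓝[≠] (0:ℂ), u (κ z) - u z = (κ z - z) * D z := by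
  obtain ⟨s₁, hs₁, hu_on⟩ := hu.exists_mem_nhds_analyticOnNhd
  obtain ⟨r₁, hr₁pos, hball₁⟩ := Metric.mem_nhds_iff.mp hs₁
  have hu_ball : AnalyticOnNhd ℂ u (ball 0 r₁) := hu_on.mono hball₁
  set r₂ := r₁ / 2 with hr₂def
  have hr₂pos : 0 < r₂ := by positivity
  have hsub21 : closedBall (0:ℂ) r₂ ⊆ ball 0 r₁ := by
    apply closedBall_subset_ball; rw [hr₂def]; linarith
  have hderiv_cont : ContinuousOn (deriv u) (closedBall (0:ℂ) r₂) :=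
    ((hu_ball.deriv).continuousOn).mono hsub21
  obtain ⟨M, hM⟩ := (isCompact_closedBall (0:ℂ) r₂).exists_bound_of_continuousOn hderiv_cont
  have hMV : ∀ x ∈ ball (0:ℂ) r₂, ∀ y ∈ ball (0:ℂ) r₂, ‖u y - u x‖ ≤ M * ‖y - x‖ := by
    intro x hx y hy
    refine (convex_ball (0:ℂ) r₂).norm_image_sub_le_of_norm_deriv_le
      (fun w hw => ?_) (fun w hw => ?_) hx hy
    · exact (hu_ball w (hsub21 (ball_subset_closedBall hw))).differentiableAt
    · exact hM w (ball_subset_closedBall hw)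
  have hκ_mem : ∀ᶠ z in 𝓝 (0:ℂ), κ z ∈ ball 0 r₂ := by
    have : ball (0:ℂ) r₂ ∈ 𝓝 (κ 0) := by rw [hκ0]; exact ball_mem_nhds _ hr₂pos
    exact hκ.continuousAt.preimage_mem_nhds this
  have hκ_diff : ∀ᶠ z in 𝓝 (0:ℂ), DifferentiableAt ℂ κ z :=
    hκ.eventually_analyticAt.mono fun z hz => hz.differentiableAt
  have hz_mem : ∀ᶠ z in 𝓝 (0:ℂ), z ∈ ball (0:ℂ) r₂ := ball_mem_nhds _ hr₂pos
  have hall : ∀ᶠ z in 𝓝 (0:ℂ),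
      (κ z ∈ ball (0:ℂ) r₂ ∧ DifferentiableAt ℂ κ z ∧ z ∈ ball (0:ℂ) r₂ ∧
        (z ≠ 0 → κ z - z ≠ 0)) := by
    filter_upwards [hκ_mem, hκ_diff, hz_mem, eventually_nhdsWithin_iff.mp hne]
      with z h1 h2 h3 h4
    exact ⟨h1, h2, h3, fun hz => h4 hz⟩
  obtain ⟨r₃, hr₃pos, hr₃⟩ := Metric.eventually_nhds_iff_ball.mp hall
  set d : ℂ → ℂ := fun z => (u (κ z) - u z) / (κ z - z) with hd_def
  have hd_diff : DifferentiableOn ℂ d (ball (0:ℂ) r₃ \ {0}) := by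
    rintro z ⟨hz, hz0⟩
    obtain ⟨h1, h2, h3, h4⟩ := hr₃ z hz
    have hu1 : DifferentiableAt ℂ u (κ z) :=
      (hu_ball (κ z) (ball_subset_ball (by linarith) h1)).differentiableAt
    have hu2 : DifferentiableAt ℂ u z :=
      (hu_ball z (ball_subset_ball (by linarith) h3)).differentiableAt
    exact (((hu1.comp z h2).sub hu2).div ((h2.sub differentiableAt_id)) (h4 hz0)).differentiableWithinAt
  have hMnn : 0 ≤ M := le_trans (norm_nonneg _) (hM 0 (mem_closedBall_self hr₂pos.le))
  have hd_bdd : BddAbove (norm ∘ d '' (ball (0:ℂ) r₃ \ {0})) := by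
    refine ⟨M, ?_⟩
    rintro x ⟨z, ⟨hz, hz0⟩, rfl⟩
    obtain ⟨h1, h2, h3, h4⟩ := hr₃ z hz
    have hz0' : (z : ℂ) ≠ 0 := hz0
    have hnum : ‖u (κ z) - u z‖ ≤ M * ‖κ z - z‖ := hMV z h3 (κ z) h1
    have hden : (0:ℝ) < ‖κ z - z‖ := norm_pos_iff.mpr (h4 hz0')
    simp only [comp_apply, hd_def, norm_div]
    rw [div_le_iff₀ hden]
    exact hnum
  have hupd := Complex.differentiableOn_update_limUnder_of_bddAbove
    (ball_mem_nhds (0:ℂ) hr₃pos) hd_diff hd_bdd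
  refine ⟨update d 0 (limUnder (𝓝[≠] (0:ℂ)) d), hupd.analyticAt (ball_mem_nhds _ hr₃pos), ?_⟩
  have hball_ev : ∀ᶠ z in 𝓝[≠] (0:ℂ), z ∈ ball (0:ℂ) r₃ :=
    eventually_nhdsWithin_of_eventually_nhds (ball_mem_nhds _ hr₃pos)
  filter_upwards [hball_ev, self_mem_nhdsWithin] with z hz hz0
  have hz0' : (z : ℂ) ≠ 0 := hz0
  obtain ⟨h1, h2, h3, h4⟩ := hr₃ z hz
  rw [update_of_ne hz0', hd_def]
  field_simp [h4 hz0']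

end Stmt14

open Stmt14

theorem stmt_14
    (δ : ℝ) (hδ : 0 < δ) (g κ : ℂ → ℂ)
    (hg : DifferentiableOn ℂ g (ball 0 δ))
    (ν : ℕ) (hν : 1 ≤ ν)
    (hord0 : ∀ k ≤ ν, iteratedDeriv k g 0 = 0)
    (hord1 : iteratedDeriv (ν + 1) g 0 ≠ 0)
    (δκ : ℝ) (hδκ : 0 < δκ)
    (hκ : DifferentiableOn ℂ κ (ball 0 δκ))
    (hκ0 : κ 0 = 0) (hκ1 : deriv κ 0 = 1)
    (hext : ∃ ρ > 0, ∃ h : ℂ → ℂ, DifferentiableOn ℂ h (ball 0 ρ) ∧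
      ∀ y ∈ ball (0:ℂ) ρ, y ≠ 0 → h y = deriv κ y / g (κ y) - 1 / g y) :
    ∃ ρ' > 0, ∃ J : ℂ → ℂ, DifferentiableOn ℂ J (ball 0 ρ') ∧
      (∀ y ∈ ball (0:ℂ) ρ', y ≠ 0 → J y = (κ y - y) / g y) ∧
      (∀ j : ℕ, 2 ≤ j → j ≤ ν → iteratedDeriv j κ 0 = 0) ∧
      iteratedDeriv (ν + 1) κ 0 = J 0 * iteratedDeriv (ν + 1) g 0 := by
  have hg_an : AnalyticAt ℂ g 0 := hg.analyticAt (isOpen_ball.mem_nhds (mem_ball_self hδ))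
  have hκ_an : AnalyticAt ℂ κ 0 := hκ.analyticAt (isOpen_ball.mem_nhds (mem_ball_self hδκ))
  -- factor g
  obtain ⟨u, hu_an, hgu⟩ := coeffs_fac hg_an (ν+1) (fun k hk => hord0 k (by omega))
  have hgu_c := (fac_coeffs (ν+1) hg_an hu_an hgu).2
  have hu0 : u 0 ≠ 0 := by
    intro h0; rw [h0, mul_zero] at hgu_c; exact hord1 hgu_c
  -- f := κ - id
  set f : ℂ → ℂ := fun z => κ z - z with hf_def
  have hf_an : AnalyticAt ℂ f 0 := hκ_an.sub analyticAt_id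
  have hf0 : iteratedDeriv 0 f 0 = 0 := by simp [hf_def, hκ0]
  have hf1 : iteratedDeriv 1 f 0 = 0 := by
    rw [iteratedDeriv_one]
    have h1 : deriv f 0 = deriv κ 0 - deriv (fun y : ℂ => y) 0 := by
      rw [hf_def]; exact deriv_fun_sub hκ_an.differentiableAt differentiableAt_id
    rw [h1, hκ1, deriv_id'']
    simp
  have main : ∃ F : ℂ → ℂ, AnalyticAt ℂ F 0 ∧ ∀ᶠ z in 𝓝 (0:ℂ), f z = z^(ν+1) * F z := by
    by_cases hcase : ∀ k, iteratedDeriv k f 0 = 0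
    · refine ⟨fun _ => 0, analyticAt_const, ?_⟩
      filter_upwards [ev_zero_of_coeffs hf_an hcase] with z hz
      simp [hz]
    · push_neg at hcase
      obtain ⟨m, hm_ne, hm_min⟩ : ∃ m, iteratedDeriv m f 0 ≠ 0 ∧
          ∀ k < m, iteratedDeriv k f 0 = 0 :=
        ⟨Nat.find hcase, Nat.find_spec hcase, fun k hk => not_not.mp (Nat.find_min hcase hk)⟩
      have hm2 : 2 ≤ m := by
        by_contra hlt
        interval_cases m
        · exact hm_ne hf0
        · exact hm_ne hf1
      obtain ⟨m', rfl⟩ : ∃ m', m = m' + 2 := ⟨m - 2, by omega⟩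
      obtain ⟨s, hs_an, hfs⟩ := coeffs_fac hf_an (m'+2) hm_min
      have hs_c := (fac_coeffs (m'+2) hf_an hs_an hfs).2
      have hs0 : s 0 ≠ 0 := fun h0 => hm_ne (by rw [hs_c, h0, mul_zero])
      -- claim : ν + 1 ≤ m
      have hm_le : ν + 1 ≤ m' + 2 := by
        by_contra hlt
        push_neg at hlt
        have hm'ν : m' + 2 ≤ ν := by omega
        -- setup
        obtain ⟨ρ, hρpos, h, h_diff, h_eq⟩ := hext
        have h_an : AnalyticAt ℂ h 0 := h_diff.analyticAt (isOpen_ball.mem_nhds (mem_ball_self hρpos))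
        set w : ℂ → ℂ := fun z => 1 + z^(m'+1) * s z with hw_def
        have hw_an : AnalyticAt ℂ w 0 := analyticAt_const.add ((analyticAt_id.pow _).mul hs_an)
        have hw0 : w 0 = 1 := by simp [hw_def]
        set V : ℂ → ℂ := fun z => ∑ k ∈ Finset.range (ν+1), w z ^ k with hV_def
        have hV_an : AnalyticAt ℂ V 0 :=
          Finset.analyticAt_fun_sum _ (fun k _ => hw_an.pow k)
        have hV0 : V 0 = ((ν:ℂ)+1) := by simp [hV_def, hw0]
        have hκw : ∀ᶠ z in 𝓝 (0:ℂ), κ z = z * w z := by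
          filter_upwards [hfs] with z hz
          have h1 : κ z - z = z^(m'+2) * s z := hz
          rw [hw_def]
          linear_combination h1
        have hκ_tendsto : Tendsto κ (𝓝 (0:ℂ)) (𝓝 (0:ℂ)) := by
          have h1 := hκ_an.continuousAt.tendsto
          rwa [hκ0] at h1
        have hgκ : ∀ᶠ z in 𝓝 (0:ℂ), g (κ z) = (κ z)^(ν+1) * u (κ z) := hκ_tendsto.eventually hgu
        have hdf_an : AnalyticAt ℂ (deriv f) 0 := analyticAt_deriv hf_an
        have hdf_ord : ∀ k < m' + 1, iteratedDeriv k (deriv f) 0 = 0 := by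
          intro k hk
          rw [← iteratedDeriv_succ']
          exact hm_min (k+1) (by omega)
        obtain ⟨B, hB_an, hdfB⟩ := coeffs_fac hdf_an (m'+1) hdf_ord
        have hB_c := (fac_coeffs (m'+1) hdf_an hB_an hdfB).2
        have hB0 : B 0 = ((m':ℂ) + 2) * s 0 := by
          have e1 : iteratedDeriv (m'+1) (deriv f) 0 = iteratedDeriv (m'+2) f 0 := by
            rw [← iteratedDeriv_succ']
          rw [e1, hs_c] at hB_c
          apply mul_left_cancel₀
            (show ((m'+1).factorial : ℂ) ≠ 0 from Nat.cast_ne_zero.2 (Nat.factorial_ne_zero _))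
          rw [← hB_c, Nat.factorial_succ]
          push_cast
          ring
        have hne : ∀ᶠ z in 𝓝[≠] (0:ℂ), κ z - z ≠ 0 := by
          rcases hf_an.eventually_eq_zero_or_eventually_ne_zero with hc0 | hc1
          · exfalso
            apply hm_ne
            have hz0 : ∀ᶠ z in 𝓝 (0:ℂ), f z = z ^ (m'+2) * (fun _ => (0:ℂ)) z := by
              filter_upwards [hc0] with z hz; simp [hz]
            have h1 := (fac_coeffs (m'+2) hf_an analyticAt_const hz0).2
            simpa using h1
          · exact hc1
        obtain ⟨D, hD_an, hDev⟩ := sub_comp_fac hu_an hκ_an hκ0 hne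
        have huκ_an : AnalyticAt ℂ (fun z => u (κ z)) 0 := by
          have h1 : AnalyticAt ℂ u (κ 0) := by rw [hκ0]; exact hu_an
          exact h1.comp hκ_an
        set Φ : ℂ → ℂ := fun z => B z * u z - (s z * V z * u (κ z) + z * (s z * D z)) with hΦ_def
        have hΦ_an : AnalyticAt ℂ Φ 0 :=
          (hB_an.mul hu_an).sub
            (((hs_an.mul hV_an).mul huκ_an).add (analyticAt_id.mul (hs_an.mul hD_an)))
        set A : ℂ → ℂ := fun z => h z * (u z * (w z ^ (ν+1) * u (κ z))) with hA_def
        have hA_an : AnalyticAt ℂ A 0 := h_an.mul (hu_an.mul ((hw_an.pow _).mul huκ_an))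
        have hder : ∀ᶠ z in 𝓝 (0:ℂ), deriv f z = deriv κ z - 1 := by
          filter_upwards [hκ_an.eventually_analyticAt] with z hz
          have h1 : deriv f z = deriv κ z - deriv (fun y : ℂ => y) z := by
            rw [hf_def]; exact deriv_fun_sub hz.differentiableAt differentiableAt_id
          rw [h1, deriv_id'']
        have hII : ∀ᶠ z in 𝓝[≠] (0:ℂ), deriv κ z * g z - g (κ z) = z^(m'+ν+2) * Φ z := by
          have base := hgu.and (hgκ.and (hκw.and (hfs.and (hdfB.and hder))))
          filter_upwards [base.filter_mono nhdsWithin_le_nhds, hDev] with z hz hDz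
          obtain ⟨e2, e3, e4, hfsz, hdfz, hderz⟩ := hz
          have e1 : deriv κ z = z^(m'+1) * B z + 1 := by
            rw [← hdfz, hderz]; ring
          have e6 : w z - 1 = z^(m'+1) * s z := by rw [hw_def]; ring
          have e5 : w z ^ (ν+1) = V z * (w z - 1) + 1 := by
            simp only [hV_def]
            linear_combination -geom_sum_mul (w z) (ν+1)
          have hfz' : κ z - z = z^(m'+2) * s z := hfsz
          have e7 : u (κ z) = u z + z^(m'+2) * s z * D z := by
            linear_combination hDz + D z * hfz'
          have e3' : g (κ z) = (z * w z)^(ν+1) * u (κ z) := by rw [← e4]; exact e3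
          simp only [hΦ_def]
          exact alg z (B z) (u z) (s z) (V z) (u (κ z)) (D z) (deriv κ z) (g z) (g (κ z))
            (w z) m' ν e1 e2 e3' e5 e6 e7
        have hI : ∀ᶠ z in 𝓝[≠] (0:ℂ), deriv κ z * g z - g (κ z) = z^(2*ν+2) * A z := by
          have hu_ne : ∀ᶠ z in 𝓝 (0:ℂ), u z ≠ 0 := hu_an.continuousAt.eventually_ne hu0
          have hw_ne : ∀ᶠ z in 𝓝 (0:ℂ), w z ≠ 0 := by
            apply hw_an.continuousAt.eventually_ne
            rw [hw0]; exact one_ne_zero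
          have huκ_ne : ∀ᶠ z in 𝓝 (0:ℂ), u (κ z) ≠ 0 := hκ_tendsto.eventually hu_ne
          have hballρ : ∀ᶠ z in 𝓝 (0:ℂ), z ∈ ball (0:ℂ) ρ := ball_mem_nhds _ hρpos
          have base := hgu.and (hgκ.and (hκw.and (hu_ne.and (hw_ne.and (huκ_ne.and hballρ)))))
          filter_upwards [base.filter_mono nhdsWithin_le_nhds, self_mem_nhdsWithin] with z hz hz0
          obtain ⟨e2, e3, e4, hu_z, hw_z, huκ_z, hρ_z⟩ := hz
          have hz0' : (z:ℂ) ≠ 0 := hz0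
          have hκz_ne : κ z ≠ 0 := by rw [e4]; exact mul_ne_zero hz0' hw_z
          have hg_ne : g z ≠ 0 := by rw [e2]; exact mul_ne_zero (pow_ne_zero _ hz0') hu_z
          have hgκ_ne : g (κ z) ≠ 0 := by
            rw [e3]; exact mul_ne_zero (pow_ne_zero _ hκz_ne) huκ_z
          have heq := h_eq z hρ_z hz0'
          have key : deriv κ z * g z - g (κ z) = h z * (g z * g (κ z)) := by
            rw [heq]
            field_simp
          simp only [hA_def]
          rw [key, e2, e3, e4, mul_pow]
          ring
        have hcomb : ∀ᶠ z in 𝓝[≠] (0:ℂ), Φ z = z^(ν - m') * A z := by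
          filter_upwards [hI, hII, self_mem_nhdsWithin] with z h1 h2 hz0
          have hz0' : (z:ℂ) ≠ 0 := hz0
          have hexp : 2*ν+2 = (m'+ν+2) + (ν - m') := by omega
          have h3 : z^(m'+ν+2) * Φ z = z^(m'+ν+2) * (z^(ν - m') * A z) := by
            rw [← h2, h1, hexp, pow_add, mul_assoc]
          exact mul_left_cancel₀ (pow_ne_zero _ hz0') h3
        have hev := ev_eq_of_punctured hΦ_an ((analyticAt_id.pow _).mul hA_an) hcomb
        have hΦ0 : Φ 0 = 0 := by
          have h0 := hev.self_of_nhds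
          rwa [Pi.mul_apply, Pi.pow_apply, id_eq, zero_pow (show ν - m' ≠ 0 by omega), zero_mul] at h0
        have hΦ0' : Φ 0 = (((m':ℂ)+2) - ((ν:ℂ)+1)) * (s 0 * u 0) := by
          simp only [hΦ_def]
          rw [hκ0, hB0, hV0]
          ring
        rw [hΦ0'] at hΦ0
        rcases mul_eq_zero.1 hΦ0 with h' | h'
        · have hc2 : ((m' + 2 : ℕ) : ℂ) = ((ν + 1 : ℕ) : ℂ) := by
            push_cast
            linear_combination h'
          have hemm := Nat.cast_inj (R := ℂ) |>.mp hc2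
          omega
        · rcases mul_eq_zero.1 h' with h'' | h''
          exacts [hs0 h'', hu0 h'']
      refine ⟨fun z => z^(m' + 2 - (ν+1)) * s z, (analyticAt_id.pow _).mul hs_an, ?_⟩
      filter_upwards [hfs] with z hz
      rw [hz, ← mul_assoc, ← pow_add]
      congr 2
      omega
  obtain ⟨F, hF_an, hfF⟩ := main
  obtain ⟨hlow, htop⟩ := fac_coeffs (ν+1) hf_an hF_an hfF
  set J : ℂ → ℂ := fun z => F z / u z with hJ_def
  have hJ_an : AnalyticAt ℂ J 0 := hF_an.div hu_an hu0
  have hall : ∀ᶠ z in 𝓝 (0:ℂ), (g z = z^(ν+1) * u z ∧ f z = z^(ν+1) * F z ∧ u z ≠ 0 ∧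
      AnalyticAt ℂ J z) := by
    filter_upwards [hgu, hfF, hu_an.continuousAt.eventually_ne hu0,
      hJ_an.eventually_analyticAt] with z h1 h2 h3 h4
    exact ⟨h1, h2, h3, h4⟩
  obtain ⟨ρ', hρ'pos, hρ'⟩ := Metric.eventually_nhds_iff_ball.mp hall
  refine ⟨ρ', hρ'pos, J, ?_, ?_, ?_, ?_⟩
  · intro z hz
    exact (hρ' z hz).2.2.2.differentiableAt.differentiableWithinAt
  · intro y hy hy0
    obtain ⟨h1, h2, h3, -⟩ := hρ' y hy
    have h2' : κ y - y = y^(ν+1) * F y := h2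
    rw [h1, h2', hJ_def]
    rw [mul_div_mul_left _ _ (pow_ne_zero _ hy0)]
  · intro j hj2 hjν
    have h0 := hlow j (by omega)
    rw [hf_def] at h0
    rw [← jets hκ_an j hj2]
    exact h0
  · rw [← jets hκ_an (ν+1) (by omega)]
    rw [hf_def] at htop
    rw [htop, hgu_c, hJ_def]
    field_simp
end

section
/- Let F ∈ ℂ[[x,y]] have zero constant coefficient and linear part equal to y + c·x for some c ∈ ℂ (so that φ(x,y) = (x, F(x,y)) is a formal unipotent parameterized diffeomorphism). Let φ_F : ℂ[[x,y]] → ℂ[[x,y]] be the substitution g(x,y) ↦ g(x, F(x,y)) and Θ := φ_F − id. Then the family (((−1)^{j+1}/j)·Θ^{∘j}(y))_{j ≥ 1} is summable in ℂ[[x,y]] for the product (coefficientwise) topology, and its sum equals û·(F − y) for some û ∈ ℂ[[x,y]] with constant coefficient 1 (in particular û is a unit). That is, the infinitesimal generator log φ is of the form û·(y∘φ − y)·∂/∂y with û a formal unit. -/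
open MvPowerSeries Finset

namespace Stmt17

noncomputable section

abbrev R2 := MvPowerSeries (Fin 2) ℂ

def dg (e : Fin 2 →₀ ℕ) : ℕ := e 0 + e 1

def ordGe (g : R2) (n : ℕ) : Prop := ∀ e : Fin 2 →₀ ℕ, dg e < n → coeff e g = 0

def eab (a b : ℕ) : Fin 2 →₀ ℕ := Finsupp.single 0 a + Finsupp.single 1 b

lemma eab_apply0 (a b : ℕ) : eab a b 0 = a := by
  simp [eab, Finsupp.single_apply]

lemma eab_apply1 (a b : ℕ) : eab a b 1 = b := by
  simp [eab, Finsupp.single_apply]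

lemma dg_eab (a b : ℕ) : dg (eab a b) = a + b := by
  simp [dg, eab_apply0, eab_apply1]

lemma eab_self (e : Fin 2 →₀ ℕ) : eab (e 0) (e 1) = e := by
  ext i
  fin_cases i
  · exact eab_apply0 _ _
  · exact eab_apply1 _ _

lemma dg_add (u v : Fin 2 →₀ ℕ) : dg (u + v) = dg u + dg v := by
  simp [dg]; ring

lemma dg_eq_zero {e : Fin 2 →₀ ℕ} (h : dg e = 0) : e = 0 := by
  have h0 : e 0 = 0 := by unfold dg at h; omega
  have h1 : e 1 = 0 := by unfold dg at h; omega
  rw [← eab_self e, h0, h1]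
  simp [eab]

lemma ordGe_mono {g : R2} {n m : ℕ} (h : ordGe g n) (hmn : m ≤ n) : ordGe g m :=
  fun e he => h e (lt_of_lt_of_le he hmn)

lemma ordGe_zero (n : ℕ) : ordGe 0 n := fun e _ => by simp

lemma ordGe_sub {f g : R2} {n : ℕ} (hf : ordGe f n) (hg : ordGe g n) :
    ordGe (f - g) n := fun e he => by
  rw [map_sub, hf e he, hg e he, sub_zero]

lemma ordGe_smul (c : ℂ) {f : R2} {n : ℕ} (hf : ordGe f n) : ordGe (c • f) n :=
  fun e he => by rw [MvPowerSeries.coeff_smul, hf e he, mul_zero]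

lemma ordGe_sum {ι : Type*} {s : Finset ι} {f : ι → R2} {n : ℕ}
    (h : ∀ i ∈ s, ordGe (f i) n) : ordGe (∑ i ∈ s, f i) n := fun e he => by
  rw [map_sum]; exact Finset.sum_eq_zero fun i hi => h i hi e he

lemma ordGe_mul {f g : R2} {a b : ℕ} (hf : ordGe f a) (hg : ordGe g b) :
    ordGe (f * g) (a + b) := by
  intro e he
  rw [MvPowerSeries.coeff_mul]
  apply Finset.sum_eq_zero
  rintro ⟨u, v⟩ huv
  rw [Finset.HasAntidiagonal.mem_antidiagonal] at huv
  have hsum : dg u + dg v = dg e := by rw [← huv, dg_add]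
  by_cases hu : dg u < a
  · rw [hf u hu, zero_mul]
  · have hv : dg v < b := by omega
    rw [hg v hv, mul_zero]

lemma ordGe_pow {f : R2} (hf : ordGe f 1) (i : ℕ) : ordGe (f ^ i) i := by
  induction i with
  | zero => exact fun e he => by omega
  | succ i ih =>
    rw [pow_succ]
    exact ordGe_mul ih hf

lemma ordGe_X (s : Fin 2) : ordGe (X s : R2) 1 := by
  intro e he
  rw [MvPowerSeries.coeff_X, if_neg]
  intro h
  subst h
  fin_cases s <;> simp [dg, Finsupp.single_apply] at he

lemma ordGe_X_pow (s : Fin 2) (i : ℕ) : ordGe ((X s : R2) ^ i) i :=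
  ordGe_pow (ordGe_X s) i

lemma coeff_Xab (m i : ℕ) (e : Fin 2 →₀ ℕ) :
    coeff e ((X 0 : R2) ^ m * X 1 ^ i) = if e = eab m i then 1 else 0 := by
  rw [X_pow_eq, X_pow_eq, monomial_mul_monomial, one_mul, coeff_monomial]
  rfl

/-! ### Truncations and the basic factorization -/

def idx (n : ℕ) : Finset (ℕ × ℕ) :=
  (range (n+1) ×ˢ range (n+1)).filter fun p => p.1 + p.2 ≤ n

lemma mem_idx {n : ℕ} {p : ℕ × ℕ} : p ∈ idx n ↔ p.1 + p.2 ≤ n := by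
  constructor
  · intro h; exact (Finset.mem_filter.1 h).2
  · intro h
    refine Finset.mem_filter.2 ⟨Finset.mem_product.2 ⟨?_, ?_⟩, h⟩ <;>
      exact Finset.mem_range.2 (by omega)

def T (n : ℕ) (g : R2) : R2 :=
  ∑ p ∈ idx n, monomial (eab p.1 p.2) (coeff (eab p.1 p.2) g)

lemma coeff_T (n : ℕ) (g : R2) (e : Fin 2 →₀ ℕ) :
    coeff e (T n g) = if dg e ≤ n then coeff e g else 0 := by
  rw [T, map_sum]
  simp only [coeff_monomial]
  by_cases h : dg e ≤ n
  · rw [if_pos h, Finset.sum_eq_single (e 0, e 1)]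
    · rw [if_pos (eab_self e).symm, eab_self]
    · intro p hp hne
      rw [if_neg]
      intro hh
      apply hne
      have h0 : e 0 = p.1 := by rw [hh, eab_apply0]
      have h1 : e 1 = p.2 := by rw [hh, eab_apply1]
      exact Prod.ext h0.symm h1.symm
    · intro habs
      exact absurd (mem_idx.2 (by simpa [dg] using h)) habs
  · rw [if_neg h]
    apply Finset.sum_eq_zero
    intro p hp
    rw [if_neg]
    intro hh
    exact h (by rw [hh, dg_eab]; exact mem_idx.1 hp)

lemma monomial_eq_smul (a b : ℕ) (c : ℂ) :
    (monomial (eab a b) c : R2) = c • ((X 0 : R2) ^ a * X 1 ^ b) := by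
  rw [X_pow_eq, X_pow_eq, monomial_mul_monomial, one_mul]
  rw [show (eab a b) = Finsupp.single 0 a + Finsupp.single 1 b from rfl]
  rw [← map_smul (monomial (Finsupp.single (0 : Fin 2) a + Finsupp.single 1 b)),
    smul_eq_mul, mul_one]

def geomb (F : R2) (b : ℕ) : R2 := ∑ i ∈ range b, F ^ i * (X 1 : R2) ^ (b - 1 - i)

lemma key_factor (F : R2) (b : ℕ) :
    F ^ b - (X 1 : R2) ^ b = geomb F b * (F - X 1) :=
  (geom_sum₂_mul F (X 1) b).symm

def W (F : R2) (n : ℕ) (g : R2) : R2 :=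
  ∑ p ∈ idx n, coeff (eab p.1 p.2) g • ((X 0 : R2) ^ p.1 * geomb F p.2)

/-! ### The hypotheses bundle -/

structure Hyp (F : R2) (Φ : R2 →ₐ[ℂ] R2) : Prop where
  hF0 : constantCoeff F = 0
  hFlin : coeff (Finsupp.single (1 : Fin 2) 1) F = 1
  hΦx : Φ (X 0) = X 0
  hΦy : Φ (X 1) = F
  hΦcont : ∀ g h : R2, ∀ d : Fin 2 →₀ ℕ,
      (∀ e : Fin 2 →₀ ℕ, e 0 + e 1 ≤ d 0 + d 1 → coeff e g = coeff e h) →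
      coeff d (Φ g) = coeff d (Φ h)

variable {F : R2} {Φ : R2 →ₐ[ℂ] R2}

lemma Phi_ordGe (H : Hyp F Φ) {g : R2} {n : ℕ} (h : ordGe g n) : ordGe (Φ g) n := by
  intro d hd
  have h0 : coeff d (Φ g) = coeff d (Φ 0) := by
    apply H.hΦcont
    intro e he
    rw [h e (by exact lt_of_le_of_lt he hd), map_zero]
  rw [h0, map_zero, map_zero]

lemma theta_ordGe (H : Hyp F Φ) {g : R2} {n : ℕ} (h : ordGe g n) :
    ordGe (Φ g - g) n :=
  ordGe_sub (Phi_ordGe H h) h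

lemma coeff_Phi_T (H : Hyp F Φ) (n : ℕ) (g : R2) (d : Fin 2 →₀ ℕ) (hd : dg d ≤ n) :
    coeff d (Φ g) = coeff d (Φ (T n g)) := by
  apply H.hΦcont
  intro e he
  rw [coeff_T, if_pos (show dg e ≤ n from le_trans he hd)]

lemma Phi_monomial (H : Hyp F Φ) (a b : ℕ) (c : ℂ) :
    Φ (monomial (eab a b) c) = c • ((X 0 : R2) ^ a * F ^ b) := by
  rw [monomial_eq_smul, map_smul, map_mul, map_pow, map_pow, H.hΦx, H.hΦy]

lemma PhiT_sub (H : Hyp F Φ) (n : ℕ) (g : R2) :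
    Φ (T n g) - T n g = W F n g * (F - X 1) := by
  rw [T, map_sum, ← Finset.sum_sub_distrib, W, Finset.sum_mul]
  apply Finset.sum_congr rfl
  intro p _
  rw [Phi_monomial H, monomial_eq_smul, ← smul_sub, smul_mul_assoc]
  congr 1
  rw [← mul_sub, key_factor, mul_assoc]

/-! ### Constant coefficients of the cofactors -/

lemma const_geomb (hF0 : constantCoeff F = 0) (b : ℕ) :
    constantCoeff (geomb F b) = if b = 1 then 1 else 0 := by
  rw [geomb, map_sum]
  match b with
  | 0 => simp
  | 1 => simp
  | (b+2) =>
    rw [if_neg (by omega)]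
    apply Finset.sum_eq_zero
    intro i hi
    rw [map_mul, map_pow, map_pow, hF0, constantCoeff_X]
    rcases Nat.eq_zero_or_pos i with h | h
    · subst h
      rw [zero_pow (by omega : b + 2 - 1 - 0 ≠ 0)]
      ring
    · rw [zero_pow (by omega : i ≠ 0)]
      ring

lemma const_W (H : Hyp F Φ) {n : ℕ} (hn : 1 ≤ n) (g : R2) :
    constantCoeff (W F n g) = coeff (Finsupp.single 1 1) g := by
  have heab : eab 0 1 = Finsupp.single 1 1 := by
    rw [eab, Finsupp.single_zero, zero_add]
  rw [W, map_sum, Finset.sum_eq_single ((0 : ℕ), (1 : ℕ))]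
  · rw [← coeff_zero_eq_constantCoeff_apply, MvPowerSeries.coeff_smul,
      coeff_zero_eq_constantCoeff_apply, map_mul, map_pow, constantCoeff_X,
      const_geomb H.hF0, heab]
    simp
  · rintro ⟨a, b⟩ hp hne
    rw [← coeff_zero_eq_constantCoeff_apply, MvPowerSeries.coeff_smul,
      coeff_zero_eq_constantCoeff_apply, map_mul, map_pow, constantCoeff_X,
      const_geomb H.hF0]
    rcases Nat.eq_zero_or_pos a with ha | ha
    · subst ha
      have hb : b ≠ 1 := fun hb => hne (by rw [hb])
      rw [if_neg hb]
      ring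
    · rw [zero_pow (by omega : a ≠ 0)]
      ring
  · intro habs
    exact absurd (mem_idx.2 (by omega)) habs

lemma G_pow_sub (c : ℂ) (m : ℕ) :
    ((X 1 : R2) + c • X 0) ^ m - (X 1 : R2) ^ m =
      ∑ i ∈ range m, (c ^ (m - i) * (m.choose i : ℂ)) • ((X 0 : R2) ^ (m - i) * X 1 ^ i) := by
  rw [add_pow, Finset.sum_range_succ, Nat.sub_self, pow_zero, mul_one, Nat.choose_self,
    Nat.cast_one, mul_one, add_sub_cancel_right]
  apply Finset.sum_congr rfl
  intro i _
  rw [smul_pow, smul_eq_C_mul, smul_eq_C_mul, map_mul,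
    ← (map_natCast (C) (m.choose i)), map_pow]
  ring

/-! ### The key unipotency estimate -/

def Pnk (g : R2) (n k : ℕ) : Prop :=
  ordGe g n ∧ ∀ e : Fin 2 →₀ ℕ, dg e = n → k < e 1 → coeff e g = 0

lemma ordGe_F_one (hF0 : constantCoeff F = 0) : ordGe F 1 := by
  intro e he
  have he0 : e = 0 := dg_eq_zero (by omega)
  rw [he0, coeff_zero_eq_constantCoeff_apply, hF0]

lemma coeff_theta_top (H : Hyp F Φ) {g : R2} {n k : ℕ} (hP : Pnk g n k)
    (d : Fin 2 →₀ ℕ) (hdn : dg d = n) (hdk : k ≤ d 1) :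
    coeff d (Φ g - g) = 0 := by
  set c : ℂ := coeff (Finsupp.single 0 1) F with hc
  set G : R2 := (X 1 : R2) + c • X 0 with hG
  have hG1 : ordGe G 1 := by
    intro e he
    have he0 : e = 0 := dg_eq_zero (by omega)
    rw [he0, hG, map_add, MvPowerSeries.coeff_smul,
      coeff_zero_eq_constantCoeff_apply, coeff_zero_eq_constantCoeff_apply,
      constantCoeff_X, constantCoeff_X]
    ring
  have hF1 : ordGe F 1 := ordGe_F_one H.hF0
  have hFG2 : ordGe (F - G) 2 := by
    intro e he
    have he' : (e 0 = 0 ∧ e 1 = 0) ∨ (e 0 = 1 ∧ e 1 = 0) ∨ (e 0 = 0 ∧ e 1 = 1) := by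
      have : e 0 + e 1 < 2 := he
      omega
    have hsx : eab 1 0 = Finsupp.single (0 : Fin 2) 1 := by
      rw [eab, Finsupp.single_zero, add_zero]
    have hsy : eab 0 1 = Finsupp.single (1 : Fin 2) 1 := by
      rw [eab, Finsupp.single_zero, zero_add]
    rw [map_sub, hG, map_add, MvPowerSeries.coeff_smul]
    rcases he' with ⟨h0, h1⟩ | ⟨h0, h1⟩ | ⟨h0, h1⟩ <;>
      rw [← eab_self e, h0, h1]
    · have heq : eab 0 0 = (0 : Fin 2 →₀ ℕ) := by
        rw [eab, Finsupp.single_zero, Finsupp.single_zero, add_zero]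
      rw [heq, coeff_zero_eq_constantCoeff_apply, H.hF0,
        coeff_zero_eq_constantCoeff_apply, constantCoeff_X,
        coeff_zero_eq_constantCoeff_apply, constantCoeff_X]
      ring
    · rw [hsx, ← hc, MvPowerSeries.coeff_X, MvPowerSeries.coeff_X,
        if_neg (by simp [Finsupp.single_eq_single_iff]), if_pos rfl]
      ring
    · rw [hsy, H.hFlin, MvPowerSeries.coeff_X, MvPowerSeries.coeff_X, if_pos rfl,
        if_neg (by simp [Finsupp.single_eq_single_iff])]
      ring
  have hTg : coeff d g = coeff d (T n g) := by
    rw [coeff_T, if_pos (le_of_eq hdn)]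
  rw [map_sub, coeff_Phi_T H n g d (le_of_eq hdn), hTg, ← map_sub]
  rw [T, map_sum, ← Finset.sum_sub_distrib, map_sum]
  apply Finset.sum_eq_zero
  rintro ⟨a, b⟩ hp
  rw [Phi_monomial H, monomial_eq_smul, ← smul_sub, ← mul_sub,
    MvPowerSeries.coeff_smul]
  by_cases hcoef : coeff (eab a b) g = 0
  · rw [hcoef, zero_mul]
  have hab : a + b ≤ n := mem_idx.1 hp
  have hpn : a + b = n := by
    by_contra hne
    exact hcoef (hP.1 _ (by rw [dg_eab]; omega))
  have hpk : b ≤ k := by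
    by_contra hne
    exact hcoef (hP.2 _ (by rw [dg_eab]; omega) (by rw [eab_apply1]; omega))
  have split : F ^ b - (X 1 : R2) ^ b = (F ^ b - G ^ b) + (G ^ b - X 1 ^ b) := by ring
  rw [split, mul_add, map_add]
  have part1 : coeff d ((X 0 : R2) ^ a * (F ^ b - G ^ b)) = 0 := by
    have hord : ordGe (F ^ b - G ^ b) (b + 1) := by
      rcases Nat.eq_zero_or_pos b with hb | hb
      · subst hb; simpa using ordGe_zero 1
      · have h2 : ordGe ((∑ i ∈ range b, F ^ i * G ^ (b - 1 - i)) * (F - G)) ((b - 1) + 2) := by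
          apply ordGe_mul _ hFG2
          apply ordGe_sum
          intro i hi
          have hib : i < b := Finset.mem_range.1 hi
          exact ordGe_mono (ordGe_mul (ordGe_pow hF1 i) (ordGe_pow hG1 (b - 1 - i)))
            (by omega)
        have h3 : F ^ b - G ^ b = (∑ i ∈ range b, F ^ i * G ^ (b - 1 - i)) * (F - G) :=
          (geom_sum₂_mul F G b).symm
        rw [h3]
        exact ordGe_mono h2 (by omega)
    exact (ordGe_mul (ordGe_X_pow 0 a) hord) d (by rw [dg] at hdn ⊢; omega)
  have part2 : coeff d ((X 0 : R2) ^ a * (G ^ b - X 1 ^ b)) = 0 := by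
    rw [hG, G_pow_sub, Finset.mul_sum, map_sum]
    apply Finset.sum_eq_zero
    intro i hi
    have hib : i < b := Finset.mem_range.1 hi
    rw [mul_smul_comm, MvPowerSeries.coeff_smul,
      show (X 0 : R2) ^ a * ((X 0 : R2) ^ (b - i) * X 1 ^ i)
          = (X 0 : R2) ^ (a + (b - i)) * X 1 ^ i by rw [← mul_assoc, ← pow_add],
      coeff_Xab, if_neg, mul_zero]
    intro hd_eq
    have : d 1 = i := by rw [hd_eq, eab_apply1]
    omega
  rw [part1, part2, add_zero, mul_zero]

/-! ### The descent through the filtration -/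

lemma lemA1 (H : Hyp F Φ) {g : R2} {n k : ℕ} (hP : Pnk g n k) :
    Pnk (Φ g - g) n (k - 1) :=
  ⟨theta_ordGe H hP.1, fun e he h1 => coeff_theta_top H hP e he (by omega)⟩

lemma lemA0 (H : Hyp F Φ) {g : R2} {n : ℕ} (hP : Pnk g n 0) : ordGe (Φ g - g) (n + 1) := by
  intro e he
  rcases lt_or_eq_of_le (Nat.lt_succ_iff.1 he) with h | h
  · exact theta_ordGe H hP.1 e h
  · exact coeff_theta_top H hP e h (Nat.zero_le _)

lemma pnk_of_ordGe {g : R2} {n : ℕ} (h : ordGe g n) : Pnk g n n :=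
  ⟨h, fun e he h1 => by
    exfalso
    have : e 1 ≤ dg e := by unfold dg; omega
    omega⟩

lemma lemA_iter (H : Hyp F Φ) {g : R2} {n : ℕ} : ∀ k, Pnk g n k →
    Pnk ((fun h => Φ h - h)^[k] g) n 0 := by
  intro k
  induction k generalizing g with
  | zero => intro hP; simpa using hP
  | succ k ih =>
    intro hP
    rw [Function.iterate_succ_apply]
    exact ih (by simpa using lemA1 H hP)

def B : ℕ → ℕ
  | 0 => 0
  | (n+1) => B n + (n + 2)

lemma B_mono : Monotone B :=
  monotone_nat_of_le_succ fun n => by rw [show B (n+1) = B n + (n+2) from rfl]; omega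

lemma B_one : B 1 = 2 := rfl

lemma B_pos : ∀ n, 1 ≤ n → 2 ≤ B n := fun n hn => by
  have := B_mono hn
  rw [B_one] at this
  omega

lemma main_chain (H : Hyp F Φ) :
    ∀ n : ℕ, Pnk ((fun h => Φ h - h)^[B n] (X 1)) (n + 1) (n + 1) := by
  intro n
  induction n with
  | zero =>
    rw [show B 0 = 0 from rfl, Function.iterate_zero_apply]
    exact pnk_of_ordGe (ordGe_X 1)
  | succ n ih =>
    have hB : B (n + 1) = (n + 2) + B n := by
      rw [show B (n+1) = B n + (n+2) from rfl]; omega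
    rw [hB, Function.iterate_add_apply]
    apply pnk_of_ordGe
    rw [Function.iterate_succ_apply']
    exact lemA0 H (lemA_iter H (n + 1) ih)

lemma ordGe_iterate (H : Hyp F Φ) {g : R2} {n : ℕ} (h : ordGe g n) (j : ℕ) :
    ordGe ((fun h => Φ h - h)^[j] g) n := by
  induction j with
  | zero => simpa using h
  | succ j ih =>
    rw [Function.iterate_succ_apply']
    exact theta_ordGe H ih

lemma ordGe_theta_iterate (H : Hyp F Φ) {j n : ℕ} (hj : B n ≤ j) :
    ordGe ((fun h => Φ h - h)^[j] (X 1)) (n + 1) := by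
  have hj' : j = (j - B n) + B n := by omega
  rw [hj', Function.iterate_add_apply]
  exact ordGe_iterate H (main_chain H n).1 _

lemma coeff_theta_vanish (H : Hyp F Φ) (d : Fin 2 →₀ ℕ) {j : ℕ} (hj : B (dg d) ≤ j) :
    coeff d ((fun h => Φ h - h)^[j] (X 1)) = 0 :=
  ordGe_theta_iterate H hj d (by omega)

/-! ### The logarithm series and its partial cofactors -/

def term (Φ : R2 →ₐ[ℂ] R2) (j : ℕ) : R2 :=
  (((-1 : ℂ) ^ (j + 2)) / ((j : ℂ) + 1)) • (fun g => Φ g - g)^[j + 1] (X 1)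

def S (Φ : R2 →ₐ[ℂ] R2) : R2 := fun d => ∑ j ∈ range (B (dg d)), coeff d (term Φ j)

lemma coeff_term_vanish (H : Hyp F Φ) (d : Fin 2 →₀ ℕ) {j : ℕ} (hj : B (dg d) ≤ j) :
    coeff d (term Φ j) = 0 := by
  rw [term, MvPowerSeries.coeff_smul, coeff_theta_vanish H d (by omega), mul_zero]

lemma coeff_S (H : Hyp F Φ) (d : Fin 2 →₀ ℕ) {M : ℕ} (hM : B (dg d) ≤ M) :
    coeff d (S Φ) = ∑ j ∈ range M, coeff d (term Φ j) := by
  rw [coeff_apply, S]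
  apply Finset.sum_subset (Finset.range_subset_range.2 hM)
  intro j _ hj
  exact coeff_term_vanish H d
    (by simpa using Nat.le_of_not_lt (fun h => hj (Finset.mem_range.2 h)))

lemma coeff_y_theta (H : Hyp F Φ) (j : ℕ) (hj : 1 ≤ j) :
    coeff (Finsupp.single 1 1) ((fun h => Φ h - h)^[j] (X 1)) = 0 := by
  rcases Nat.lt_or_ge j 2 with h2 | h2
  · have hj1 : j = 1 := by omega
    subst hj1
    rw [Function.iterate_one]
    have h3 : Φ (X 1) - X 1 = F - X 1 := by rw [H.hΦy]
    rw [h3, map_sub, H.hFlin, MvPowerSeries.coeff_X, if_pos rfl, sub_self]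
  · have h3 : ordGe ((fun h => Φ h - h)^[j] (X 1)) 2 := by
      have := ordGe_theta_iterate H (n := 1) (j := j) (by rw [B_one]; omega)
      exact this
    apply h3
    show dg (Finsupp.single 1 1) < 2
    have h0 : (Finsupp.single (1 : Fin 2) 1) 0 = 0 := by
      rw [Finsupp.single_apply, if_neg (by decide)]
    have h1 : (Finsupp.single (1 : Fin 2) 1) 1 = 1 := by
      rw [Finsupp.single_apply, if_pos rfl]
    unfold dg
    omega

def Vv (F : R2) (Φ : R2 →ₐ[ℂ] R2) (N : ℕ) : ℕ → R2
  | 0 => 1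
  | (j+1) => W F N ((fun h => Φ h - h)^[j + 1] (X 1))

lemma remainder (H : Hyp F Φ) (N : ℕ) (j : ℕ) :
    ordGe ((fun h => Φ h - h)^[j + 1] (X 1) - (F - X 1) * Vv F Φ N j) N := by
  rcases Nat.eq_zero_or_pos j with hj | hj
  · subst hj
    have h1 : (fun h => Φ h - h)^[1] (X 1) = F - X 1 := by
      rw [Function.iterate_one]
      show Φ (X 1) - X 1 = F - X 1
      rw [H.hΦy]
    rw [h1, show Vv F Φ N 0 = 1 from rfl, mul_one, sub_self]
    intro e _; simp
  · obtain ⟨j', rfl⟩ : ∃ j', j = j' + 1 := ⟨j - 1, by omega⟩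
    set h : R2 := (fun h => Φ h - h)^[j' + 1] (X 1) with hh
    have hstep : (fun h => Φ h - h)^[j' + 1 + 1] (X 1) = Φ h - h := by
      rw [Function.iterate_succ_apply']
    have hV : Vv F Φ N (j' + 1) = W F N h := rfl
    rw [hstep, hV, show (F - X 1) * W F N h = W F N h * (F - X 1) from mul_comm _ _,
      ← PhiT_sub H N h]
    have heq : Φ h - h - (Φ (T N h) - T N h) = Φ (h - T N h) - (h - T N h) := by
      rw [map_sub]; ring
    rw [heq]
    apply ordGe_mono (theta_ordGe H (n := N + 1) ?_) (by omega)
    intro e he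
    rw [map_sub, coeff_T, if_pos (by omega : dg e ≤ N), sub_self]

lemma const_Vv (H : Hyp F Φ) (N : ℕ) (hN : 1 ≤ N) (j : ℕ) :
    constantCoeff (Vv F Φ N j) = if j = 0 then 1 else 0 := by
  rcases Nat.eq_zero_or_pos j with hj | hj
  · subst hj; simp [Vv]
  · obtain ⟨j', rfl⟩ : ∃ j', j = j' + 1 := ⟨j - 1, by omega⟩
    rw [if_neg (by omega),
      show Vv F Φ N (j' + 1) = W F N ((fun h => Φ h - h)^[j' + 1] (X 1)) from rfl,
      const_W H hN, coeff_y_theta H (j' + 1) (by omega)]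

lemma approx (H : Hyp F Φ) (N : ℕ) :
    ∃ q : R2, constantCoeff q = 1 ∧ ordGe (S Φ - (F - X 1) * q) N := by
  set N1 := N + 1 with hN1
  set M := B N1 with hM
  have hM2 : 2 ≤ M := B_pos N1 (by omega)
  refine ⟨∑ j ∈ range M, (((-1 : ℂ) ^ (j + 2)) / ((j : ℂ) + 1)) • Vv F Φ N1 j, ?_, ?_⟩
  · rw [map_sum]
    rw [Finset.sum_eq_single 0]
    · rw [← coeff_zero_eq_constantCoeff_apply, MvPowerSeries.coeff_smul,
        coeff_zero_eq_constantCoeff_apply, const_Vv H N1 (by omega), if_pos rfl]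
      norm_num
    · intro j _ hj
      rw [← coeff_zero_eq_constantCoeff_apply, MvPowerSeries.coeff_smul,
        coeff_zero_eq_constantCoeff_apply, const_Vv H N1 (by omega), if_neg hj, mul_zero]
    · intro habs
      exact absurd (Finset.mem_range.2 (by omega)) habs
  · intro d hd
    have hdN : dg d < N1 := by omega
    rw [map_sub, coeff_S H d (show B (dg d) ≤ M from B_mono (by omega)),
      Finset.mul_sum, map_sum, ← Finset.sum_sub_distrib]
    apply Finset.sum_eq_zero
    intro j _
    have hcomm : (F - X 1) * ((((-1 : ℂ) ^ (j + 2)) / ((j : ℂ) + 1)) • Vv F Φ N1 j)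
        = (((-1 : ℂ) ^ (j + 2)) / ((j : ℂ) + 1)) • ((F - X 1) * Vv F Φ N1 j) :=
      mul_smul_comm _ _ _
    rw [hcomm, term, MvPowerSeries.coeff_smul, MvPowerSeries.coeff_smul, ← mul_sub,
      ← map_sub (coeff d), remainder H N1 j d hdN, mul_zero]

/-! ### Leading homogeneous forms and division -/

def idxE (n : ℕ) : Finset (ℕ × ℕ) :=
  (range (n+1) ×ˢ range (n+1)).filter fun p => p.1 + p.2 = n

lemma mem_idxE {n : ℕ} {p : ℕ × ℕ} : p ∈ idxE n ↔ p.1 + p.2 = n := by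
  constructor
  · intro h; exact (Finset.mem_filter.1 h).2
  · intro h
    refine Finset.mem_filter.2 ⟨Finset.mem_product.2 ⟨?_, ?_⟩, h⟩ <;>
      exact Finset.mem_range.2 (by omega)

def hC (n : ℕ) (g : R2) : MvPolynomial (Fin 2) ℂ :=
  ∑ p ∈ idxE n, MvPolynomial.monomial (eab p.1 p.2) (coeff (eab p.1 p.2) g)

lemma coeff_hC (n : ℕ) (g : R2) (e : Fin 2 →₀ ℕ) :
    MvPolynomial.coeff e (hC n g) = if dg e = n then coeff e g else 0 := by
  rw [hC]
  rw [MvPolynomial.coeff_sum]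
  simp only [MvPolynomial.coeff_monomial]
  by_cases h : dg e = n
  · rw [if_pos h, Finset.sum_eq_single (e 0, e 1)]
    · rw [if_pos (eab_self e), eab_self]
    · intro p hp hne
      rw [if_neg]
      intro hh
      apply hne
      have h0 : e 0 = p.1 := by rw [← hh, eab_apply0]
      have h1 : e 1 = p.2 := by rw [← hh, eab_apply1]
      exact Prod.ext h0.symm h1.symm
    · intro habs
      exact absurd (mem_idxE.2 (by simpa [dg] using h)) habs
  · rw [if_neg h]
    apply Finset.sum_eq_zero
    intro p hp
    rw [if_neg]
    intro hh
    exact h (by rw [← hh, dg_eab]; exact mem_idxE.1 hp)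

lemma hC_ne_zero {n : ℕ} {g : R2} (h : ∃ e, dg e = n ∧ coeff e g ≠ 0) :
    hC n g ≠ 0 := by
  obtain ⟨e, he, hc⟩ := h
  intro h0
  apply hc
  have hcc := coeff_hC n g e
  rw [if_pos he, h0] at hcc
  simpa using hcc.symm

lemma mul_leading {δ w : R2} {a b : ℕ}
    (hδo : ordGe δ a) (hδe : ∃ e, dg e = a ∧ coeff e δ ≠ 0)
    (hwo : ordGe w b) (hwe : ∃ e, dg e = b ∧ coeff e w ≠ 0) :
    ∃ d, dg d = a + b ∧ coeff d (δ * w) ≠ 0 := by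
  have hne : hC a δ * hC b w ≠ 0 := mul_ne_zero (hC_ne_zero hδe) (hC_ne_zero hwe)
  obtain ⟨d, hd⟩ : ∃ d, MvPolynomial.coeff d (hC a δ * hC b w) ≠ 0 := by
    by_contra h
    push_neg at h
    exact hne (MvPolynomial.ext _ _ fun d => by rw [h d, MvPolynomial.coeff_zero])
  have hdd : dg d = a + b := by
    by_contra hne2
    apply hd
    rw [MvPolynomial.coeff_mul]
    apply Finset.sum_eq_zero
    rintro ⟨u, v⟩ huv
    rw [Finset.HasAntidiagonal.mem_antidiagonal] at huv
    have hsum : dg u + dg v = dg d := by rw [← huv, dg_add]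
    rw [coeff_hC, coeff_hC]
    by_cases h1 : dg u = a
    · rw [if_neg (by omega : ¬ dg v = b), mul_zero]
    · rw [if_neg h1, zero_mul]
  refine ⟨d, hdd, ?_⟩
  have hmatch : coeff d (δ * w) = MvPolynomial.coeff d (hC a δ * hC b w) := by
    rw [MvPowerSeries.coeff_mul, MvPolynomial.coeff_mul]
    apply Finset.sum_congr rfl
    rintro ⟨u, v⟩ huv
    rw [Finset.HasAntidiagonal.mem_antidiagonal] at huv
    have hsum : dg u + dg v = dg d := by rw [← huv, dg_add]
    rw [coeff_hC, coeff_hC]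
    by_cases h1 : dg u = a
    · rw [if_pos h1, if_pos (by omega : dg v = b)]
    · rw [if_neg h1, zero_mul]
      rcases Nat.lt_or_ge (dg u) a with hlt | hge
      · rw [hδo u hlt, zero_mul]
      · rw [hwo v (by omega), mul_zero]
  rw [hmatch]
  exact hd

lemma div_ordGe {δ : R2} {a : ℕ}
    (hδo : ordGe δ a) (hδe : ∃ e, dg e = a ∧ coeff e δ ≠ 0)
    {w : R2} {N : ℕ} (h : ordGe (δ * w) N) : ordGe w (N - a) := by
  intro e he
  by_contra hc
  have hex : ∃ n : ℕ, ∃ e' : Fin 2 →₀ ℕ, dg e' = n ∧ coeff e' w ≠ 0 := ⟨dg e, e, rfl, hc⟩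
  classical
  set b := Nat.find hex with hb
  obtain ⟨e', he', hce'⟩ := Nat.find_spec hex
  have hb_le : b ≤ dg e := Nat.find_le ⟨e, rfl, hc⟩
  have hwo : ordGe w b := by
    intro e'' he''
    by_contra hne
    have hle : b ≤ dg e'' := Nat.find_le ⟨e'', rfl, hne⟩
    omega
  obtain ⟨d, hdd, hdc⟩ := mul_leading hδo hδe hwo ⟨e', he', hce'⟩
  exact hdc (h d (by omega))

end

end Stmt17

open MvPowerSeries Stmt17

/-- the infinitesimal generator of a formal unipotent parameterized
diffeomorphism `(x,y) ↦ (x,F)`: the logarithm series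
`Σ_{j≥1} ((−1)^{j+1}/j)·(φ_F − id)^{∘j}(y)` is summable coefficientwise and its sum
is `uhat·(F − y)` for a formal unit `uhat` with constant coefficient `1`.  The
substitution `φ_F` is characterized as a `ℂ`-algebra endomorphism sending `x ↦ x`,
`y ↦ F` and continuous for the coefficientwise topology. -/
theorem stmt_17
    (F : MvPowerSeries (Fin 2) ℂ)
    (hF0 : constantCoeff F = 0)
    (hFlin : coeff (Finsupp.single (1 : Fin 2) 1) F = 1)
    (Φ : MvPowerSeries (Fin 2) ℂ →ₐ[ℂ] MvPowerSeries (Fin 2) ℂ)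
    (hΦx : Φ (X 0) = X 0) (hΦy : Φ (X 1) = F)
    (hΦcont : ∀ g h : MvPowerSeries (Fin 2) ℂ, ∀ d : Fin 2 →₀ ℕ,
      (∀ e : Fin 2 →₀ ℕ, e 0 + e 1 ≤ d 0 + d 1 → coeff e g = coeff e h) →
      coeff d (Φ g) = coeff d (Φ h)) :
    ∃ uhat : MvPowerSeries (Fin 2) ℂ,
      constantCoeff uhat = 1 ∧
      ∀ d : Fin 2 →₀ ℕ,
        {j : ℕ | coeff d
            ((((-1 : ℂ) ^ (j + 2)) / ((j : ℂ) + 1)) •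
              (fun g => Φ g - g)^[j + 1] (X 1)) ≠ 0}.Finite ∧
        coeff d (uhat * (F - X 1)) =
          ∑ᶠ j : ℕ, coeff d
            ((((-1 : ℂ) ^ (j + 2)) / ((j : ℂ) + 1)) •
              (fun g => Φ g - g)^[j + 1] (X 1)) := by
  classical
  have H : Hyp F Φ := ⟨hF0, hFlin, hΦx, hΦy, hΦcont⟩
  have hfin : ∀ d : Fin 2 →₀ ℕ,
      {j : ℕ | coeff d (term Φ j) ≠ 0}.Finite := by
    intro d
    apply Set.Finite.subset (Finset.range (B (dg d))).finite_toSet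
    intro j hj
    refine Finset.mem_coe.2 (Finset.mem_range.2 ?_)
    by_contra hge
    exact hj (coeff_term_vanish H d (by omega))
  have hsupp : ∀ d : Fin 2 →₀ ℕ,
      Function.support (fun j => coeff d (term Φ j)) ⊆ ↑(Finset.range (B (dg d))) := by
    intro d j hj
    refine Finset.mem_coe.2 (Finset.mem_range.2 ?_)
    by_contra hge
    exact hj (coeff_term_vanish H d (by omega))
  have hfinsum : ∀ d : Fin 2 →₀ ℕ,
      ∑ᶠ j : ℕ, coeff d (term Φ j) = coeff d (S Φ) := by
    intro d
    rw [finsum_eq_sum_of_support_subset _ (hsupp d), coeff_S H d le_rfl]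
  obtain ⟨uhat, hu1, hu2⟩ :
      ∃ uhat : MvPowerSeries (Fin 2) ℂ, constantCoeff uhat = 1 ∧
        ∀ d : Fin 2 →₀ ℕ, coeff d (uhat * (F - X 1)) = coeff d (S Φ) := by
    by_cases hδ : F - X 1 = 0
    · refine ⟨1, map_one _, fun d => ?_⟩
      have hz : ∀ j : ℕ, (fun g => Φ g - g)^[j + 1] (X 1) = (0 : MvPowerSeries (Fin 2) ℂ) := by
        intro j
        induction j with
        | zero =>
          rw [Function.iterate_one]
          show Φ (X 1) - X 1 = 0
          rw [hΦy]; exact hδ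
        | succ j ih =>
          rw [Function.iterate_succ_apply', ih]
          show Φ 0 - 0 = 0
          rw [map_zero, sub_zero]
      rw [one_mul, hδ, map_zero, coeff_S H d le_rfl]
      symm
      apply Finset.sum_eq_zero
      intro j _
      rw [term, hz j, smul_zero, map_zero]
    · have hex : ∃ n : ℕ, ∃ e : Fin 2 →₀ ℕ, dg e = n ∧ coeff e (F - X 1) ≠ 0 := by
        have h1 : ∃ e, coeff e (F - X 1) ≠ 0 := by
          by_contra hc
          push_neg at hc
          exact hδ (MvPowerSeries.ext fun e => by rw [hc e, map_zero])
        obtain ⟨e, he⟩ := h1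
        exact ⟨dg e, e, rfl, he⟩
      set a := Nat.find hex with ha
      have hδe : ∃ e : Fin 2 →₀ ℕ, dg e = a ∧ coeff e (F - X 1) ≠ 0 := Nat.find_spec hex
      have hδo : ordGe (F - X 1) a := by
        intro e he
        by_contra hne
        have hle : a ≤ dg e := Nat.find_le ⟨e, rfl, hne⟩
        omega
      choose q hq1 hq2 using approx H (F := F)
      set uhat : MvPowerSeries (Fin 2) ℂ := fun e => coeff e (q (dg e + a + 1)) with huh
      have key : ∀ (e : Fin 2 →₀ ℕ) (M : ℕ), dg e + a + 1 ≤ M →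
          coeff e uhat = coeff e (q M) := by
        intro e M hM
        have h1 : coeff e uhat = coeff e (q (dg e + a + 1)) := rfl
        have hdiff : ordGe (q (dg e + a + 1) - q M) (min (dg e + a + 1) M - a) := by
          apply div_ordGe hδo hδe
          have hmul : (F - X 1) * (q (dg e + a + 1) - q M)
              = (S Φ - (F - X 1) * q M) - (S Φ - (F - X 1) * q (dg e + a + 1)) := by ring
          rw [hmul]
          exact ordGe_sub (ordGe_mono (hq2 M) (by omega))
            (ordGe_mono (hq2 (dg e + a + 1)) (by omega))
        have h2 := hdiff e (by omega)
        rw [map_sub, sub_eq_zero] at h2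
        rw [h1, h2]
      refine ⟨uhat, ?_, ?_⟩
      · have h0 : dg (0 : Fin 2 →₀ ℕ) = 0 := by simp [dg]
        have hkey := key 0 (a + 1) (by omega)
        rw [coeff_zero_eq_constantCoeff_apply, coeff_zero_eq_constantCoeff_apply] at hkey
        rw [hkey, hq1]
      · intro d
        set M := dg d + a + 1 with hMdef
        have h1 : coeff d (uhat * (F - X 1)) = coeff d (q M * (F - X 1)) := by
          rw [MvPowerSeries.coeff_mul, MvPowerSeries.coeff_mul]
          apply Finset.sum_congr rfl
          rintro ⟨u, v⟩ huv
          rw [Finset.HasAntidiagonal.mem_antidiagonal] at huv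
          have hud : dg u + dg v = dg d := by rw [← huv, dg_add]
          rw [key u M (by omega)]
        have h2 := hq2 M d (by omega)
        rw [map_sub, sub_eq_zero] at h2
        rw [h1, mul_comm, ← h2]
  refine ⟨uhat, hu1, fun d => ⟨hfin d, ?_⟩⟩
  show coeff d (uhat * (F - X 1)) = ∑ᶠ j : ℕ, coeff d (term Φ j)
  rw [hfinsum d, hu2 d]
end
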